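/- arXiv:2302.07208 — 8 statements merged into one kernel-verified Lean document; each statement's English description precedes it below -/
import Mathlib

section
/- Let m > 0 be a real number and J an invertible real 3×3 matrix. Then there exist positive constants Δ_B̄ and Δ_B̄inv such that for every rotation matrix R ∈ SO(3), the 6×6 real matrix B̄(R) is invertible, its operator norm satisfies ‖B̄(R)‖ ≤ Δ_B̄, and the operator norm of its inverse satisfies ‖B̄(R)⁻¹‖ ≤ Δ_B̄inv. -/
open scoped Matrix

/-- The input matrix `B̄(R)` of the quadrotor's uncertain partial dynamics:
a 6×6 block matrix whose first three rows are the blocks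
`[−m⁻¹ R e₃ , 0₃ₓ₃ , m⁻¹ R e₁ , m⁻¹ R e₂]` and whose last three rows are
`[0₃ₓ₁ , J⁻¹ , 0₃ₓ₁ , 0₃ₓ₁]`. -/
noncomputable def Bbar (m : ℝ) (J : Matrix (Fin 3) (Fin 3) ℝ)
    (R : Matrix (Fin 3) (Fin 3) ℝ) : Matrix (Fin 6) (Fin 6) ℝ :=
  Matrix.of fun i j =>
    if hi : (i : ℕ) < 3 then
      -- first three rows
      if (j : ℕ) = 0 then -(m⁻¹ * R ⟨i, hi⟩ 2)
      else if (j : ℕ) = 4 then m⁻¹ * R ⟨i, hi⟩ 0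
      else if (j : ℕ) = 5 then m⁻¹ * R ⟨i, hi⟩ 1
      else 0
    else
      -- last three rows
      if hj : 1 ≤ (j : ℕ) ∧ (j : ℕ) ≤ 3 then
        J⁻¹ ⟨(i : ℕ) - 3, by omega⟩ ⟨(j : ℕ) - 1, by omega⟩
      else 0

noncomputable def Cmat (m : ℝ) (J : Matrix (Fin 3) (Fin 3) ℝ)
    (R : Matrix (Fin 3) (Fin 3) ℝ) : Matrix (Fin 6) (Fin 6) ℝ :=
  Matrix.of fun i j =>
    if hj : (j : ℕ) < 3 then
      if (i : ℕ) = 0 then -(m * R ⟨j, hj⟩ 2)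
      else if (i : ℕ) = 4 then m * R ⟨j, hj⟩ 0
      else if (i : ℕ) = 5 then m * R ⟨j, hj⟩ 1
      else 0
    else
      if hi : 1 ≤ (i : ℕ) ∧ (i : ℕ) ≤ 3 then
        J ⟨(i : ℕ) - 1, by omega⟩ ⟨(j : ℕ) - 3, by omega⟩
      else 0

lemma Bbar_eq (m : ℝ) (J R : Matrix (Fin 3) (Fin 3) ℝ) :
    Bbar m J R =
      !![-(m⁻¹ * R 0 2), 0, 0, 0, m⁻¹ * R 0 0, m⁻¹ * R 0 1;
         -(m⁻¹ * R 1 2), 0, 0, 0, m⁻¹ * R 1 0, m⁻¹ * R 1 1;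
         -(m⁻¹ * R 2 2), 0, 0, 0, m⁻¹ * R 2 0, m⁻¹ * R 2 1;
         0, J⁻¹ 0 0, J⁻¹ 0 1, J⁻¹ 0 2, 0, 0;
         0, J⁻¹ 1 0, J⁻¹ 1 1, J⁻¹ 1 2, 0, 0;
         0, J⁻¹ 2 0, J⁻¹ 2 1, J⁻¹ 2 2, 0, 0] := by
  ext i j
  fin_cases i <;> fin_cases j <;> rfl

lemma Cmat_eq (m : ℝ) (J R : Matrix (Fin 3) (Fin 3) ℝ) :
    Cmat m J R =
      !![-(m * R 0 2), -(m * R 1 2), -(m * R 2 2), 0, 0, 0;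
         0, 0, 0, J 0 0, J 0 1, J 0 2;
         0, 0, 0, J 1 0, J 1 1, J 1 2;
         0, 0, 0, J 2 0, J 2 1, J 2 2;
         m * R 0 0, m * R 1 0, m * R 2 0, 0, 0, 0;
         m * R 0 1, m * R 1 1, m * R 2 1, 0, 0, 0] := by
  ext i j
  fin_cases i <;> fin_cases j <;> rfl


set_option maxHeartbeats 3000000 in
lemma mul_ids (m : ℝ) (hm : m ≠ 0) (J R : Matrix (Fin 3) (Fin 3) ℝ)
    (hJ : IsUnit J) (hR : Rᵀ * R = 1) :
    Bbar m J R * Cmat m J R = 1 ∧ Cmat m J R * Bbar m J R = 1 := by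
  have hdJ : IsUnit J.det := (Matrix.isUnit_iff_isUnit_det J).mp hJ
  have hR' : R * Rᵀ = 1 := mul_eq_one_comm.mp hR
  have hJ1 : J⁻¹ * J = 1 := Matrix.nonsing_inv_mul J hdJ
  have hJ2 : J * J⁻¹ = 1 := Matrix.mul_nonsing_inv J hdJ
  have hminv : m⁻¹ * m = 1 := inv_mul_cancel₀ hm
  have hminv' : m * m⁻¹ = 1 := mul_inv_cancel₀ hm
  have e00 : R 0 0 * R 0 0 + R 0 1 * R 0 1 + R 0 2 * R 0 2 = (1:ℝ) := by
    have h := congrFun (congrFun hR' 0) 0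
    simp [Matrix.mul_apply, Fin.sum_univ_three, Matrix.transpose_apply, Matrix.one_apply] at h
    linear_combination h
  have e01 : R 0 0 * R 1 0 + R 0 1 * R 1 1 + R 0 2 * R 1 2 = (0:ℝ) := by
    have h := congrFun (congrFun hR' 0) 1
    simp [Matrix.mul_apply, Fin.sum_univ_three, Matrix.transpose_apply, Matrix.one_apply] at h
    linear_combination h
  have e02 : R 0 0 * R 2 0 + R 0 1 * R 2 1 + R 0 2 * R 2 2 = (0:ℝ) := by
    have h := congrFun (congrFun hR' 0) 2
    simp [Matrix.mul_apply, Fin.sum_univ_three, Matrix.transpose_apply, Matrix.one_apply] at h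
    linear_combination h
  have e10 : R 1 0 * R 0 0 + R 1 1 * R 0 1 + R 1 2 * R 0 2 = (0:ℝ) := by
    have h := congrFun (congrFun hR' 1) 0
    simp [Matrix.mul_apply, Fin.sum_univ_three, Matrix.transpose_apply, Matrix.one_apply] at h
    linear_combination h
  have e11 : R 1 0 * R 1 0 + R 1 1 * R 1 1 + R 1 2 * R 1 2 = (1:ℝ) := by
    have h := congrFun (congrFun hR' 1) 1
    simp [Matrix.mul_apply, Fin.sum_univ_three, Matrix.transpose_apply, Matrix.one_apply] at h
    linear_combination h
  have e12 : R 1 0 * R 2 0 + R 1 1 * R 2 1 + R 1 2 * R 2 2 = (0:ℝ) := by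
    have h := congrFun (congrFun hR' 1) 2
    simp [Matrix.mul_apply, Fin.sum_univ_three, Matrix.transpose_apply, Matrix.one_apply] at h
    linear_combination h
  have e20 : R 2 0 * R 0 0 + R 2 1 * R 0 1 + R 2 2 * R 0 2 = (0:ℝ) := by
    have h := congrFun (congrFun hR' 2) 0
    simp [Matrix.mul_apply, Fin.sum_univ_three, Matrix.transpose_apply, Matrix.one_apply] at h
    linear_combination h
  have e21 : R 2 0 * R 1 0 + R 2 1 * R 1 1 + R 2 2 * R 1 2 = (0:ℝ) := by
    have h := congrFun (congrFun hR' 2) 1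
    simp [Matrix.mul_apply, Fin.sum_univ_three, Matrix.transpose_apply, Matrix.one_apply] at h
    linear_combination h
  have e22 : R 2 0 * R 2 0 + R 2 1 * R 2 1 + R 2 2 * R 2 2 = (1:ℝ) := by
    have h := congrFun (congrFun hR' 2) 2
    simp [Matrix.mul_apply, Fin.sum_univ_three, Matrix.transpose_apply, Matrix.one_apply] at h
    linear_combination h
  have c00 : R 0 0 * R 0 0 + R 1 0 * R 1 0 + R 2 0 * R 2 0 = (1:ℝ) := by
    have h := congrFun (congrFun hR 0) 0
    simp [Matrix.mul_apply, Fin.sum_univ_three, Matrix.transpose_apply, Matrix.one_apply] at h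
    linear_combination h
  have c01 : R 0 0 * R 0 1 + R 1 0 * R 1 1 + R 2 0 * R 2 1 = (0:ℝ) := by
    have h := congrFun (congrFun hR 0) 1
    simp [Matrix.mul_apply, Fin.sum_univ_three, Matrix.transpose_apply, Matrix.one_apply] at h
    linear_combination h
  have c02 : R 0 0 * R 0 2 + R 1 0 * R 1 2 + R 2 0 * R 2 2 = (0:ℝ) := by
    have h := congrFun (congrFun hR 0) 2
    simp [Matrix.mul_apply, Fin.sum_univ_three, Matrix.transpose_apply, Matrix.one_apply] at h
    linear_combination h
  have c10 : R 0 1 * R 0 0 + R 1 1 * R 1 0 + R 2 1 * R 2 0 = (0:ℝ) := by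
    have h := congrFun (congrFun hR 1) 0
    simp [Matrix.mul_apply, Fin.sum_univ_three, Matrix.transpose_apply, Matrix.one_apply] at h
    linear_combination h
  have c11 : R 0 1 * R 0 1 + R 1 1 * R 1 1 + R 2 1 * R 2 1 = (1:ℝ) := by
    have h := congrFun (congrFun hR 1) 1
    simp [Matrix.mul_apply, Fin.sum_univ_three, Matrix.transpose_apply, Matrix.one_apply] at h
    linear_combination h
  have c12 : R 0 1 * R 0 2 + R 1 1 * R 1 2 + R 2 1 * R 2 2 = (0:ℝ) := by
    have h := congrFun (congrFun hR 1) 2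
    simp [Matrix.mul_apply, Fin.sum_univ_three, Matrix.transpose_apply, Matrix.one_apply] at h
    linear_combination h
  have c20 : R 0 2 * R 0 0 + R 1 2 * R 1 0 + R 2 2 * R 2 0 = (0:ℝ) := by
    have h := congrFun (congrFun hR 2) 0
    simp [Matrix.mul_apply, Fin.sum_univ_three, Matrix.transpose_apply, Matrix.one_apply] at h
    linear_combination h
  have c21 : R 0 2 * R 0 1 + R 1 2 * R 1 1 + R 2 2 * R 2 1 = (0:ℝ) := by
    have h := congrFun (congrFun hR 2) 1
    simp [Matrix.mul_apply, Fin.sum_univ_three, Matrix.transpose_apply, Matrix.one_apply] at h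
    linear_combination h
  have c22 : R 0 2 * R 0 2 + R 1 2 * R 1 2 + R 2 2 * R 2 2 = (1:ℝ) := by
    have h := congrFun (congrFun hR 2) 2
    simp [Matrix.mul_apply, Fin.sum_univ_three, Matrix.transpose_apply, Matrix.one_apply] at h
    linear_combination h
  have f00 : J⁻¹ 0 0 * J 0 0 + J⁻¹ 0 1 * J 1 0 + J⁻¹ 0 2 * J 2 0 = (1:ℝ) := by
    have h := congrFun (congrFun hJ1 0) 0
    simp [Matrix.mul_apply, Fin.sum_univ_three, Matrix.one_apply] at h
    linear_combination h
  have q00 : J 0 0 * J⁻¹ 0 0 + J 0 1 * J⁻¹ 1 0 + J 0 2 * J⁻¹ 2 0 = (1:ℝ) := by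
    have h := congrFun (congrFun hJ2 0) 0
    simp [Matrix.mul_apply, Fin.sum_univ_three, Matrix.one_apply] at h
    linear_combination h
  have f01 : J⁻¹ 0 0 * J 0 1 + J⁻¹ 0 1 * J 1 1 + J⁻¹ 0 2 * J 2 1 = (0:ℝ) := by
    have h := congrFun (congrFun hJ1 0) 1
    simp [Matrix.mul_apply, Fin.sum_univ_three, Matrix.one_apply] at h
    linear_combination h
  have q01 : J 0 0 * J⁻¹ 0 1 + J 0 1 * J⁻¹ 1 1 + J 0 2 * J⁻¹ 2 1 = (0:ℝ) := by
    have h := congrFun (congrFun hJ2 0) 1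
    simp [Matrix.mul_apply, Fin.sum_univ_three, Matrix.one_apply] at h
    linear_combination h
  have f02 : J⁻¹ 0 0 * J 0 2 + J⁻¹ 0 1 * J 1 2 + J⁻¹ 0 2 * J 2 2 = (0:ℝ) := by
    have h := congrFun (congrFun hJ1 0) 2
    simp [Matrix.mul_apply, Fin.sum_univ_three, Matrix.one_apply] at h
    linear_combination h
  have q02 : J 0 0 * J⁻¹ 0 2 + J 0 1 * J⁻¹ 1 2 + J 0 2 * J⁻¹ 2 2 = (0:ℝ) := by
    have h := congrFun (congrFun hJ2 0) 2
    simp [Matrix.mul_apply, Fin.sum_univ_three, Matrix.one_apply] at h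
    linear_combination h
  have f10 : J⁻¹ 1 0 * J 0 0 + J⁻¹ 1 1 * J 1 0 + J⁻¹ 1 2 * J 2 0 = (0:ℝ) := by
    have h := congrFun (congrFun hJ1 1) 0
    simp [Matrix.mul_apply, Fin.sum_univ_three, Matrix.one_apply] at h
    linear_combination h
  have q10 : J 1 0 * J⁻¹ 0 0 + J 1 1 * J⁻¹ 1 0 + J 1 2 * J⁻¹ 2 0 = (0:ℝ) := by
    have h := congrFun (congrFun hJ2 1) 0
    simp [Matrix.mul_apply, Fin.sum_univ_three, Matrix.one_apply] at h
    linear_combination h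
  have f11 : J⁻¹ 1 0 * J 0 1 + J⁻¹ 1 1 * J 1 1 + J⁻¹ 1 2 * J 2 1 = (1:ℝ) := by
    have h := congrFun (congrFun hJ1 1) 1
    simp [Matrix.mul_apply, Fin.sum_univ_three, Matrix.one_apply] at h
    linear_combination h
  have q11 : J 1 0 * J⁻¹ 0 1 + J 1 1 * J⁻¹ 1 1 + J 1 2 * J⁻¹ 2 1 = (1:ℝ) := by
    have h := congrFun (congrFun hJ2 1) 1
    simp [Matrix.mul_apply, Fin.sum_univ_three, Matrix.one_apply] at h
    linear_combination h
  have f12 : J⁻¹ 1 0 * J 0 2 + J⁻¹ 1 1 * J 1 2 + J⁻¹ 1 2 * J 2 2 = (0:ℝ) := by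
    have h := congrFun (congrFun hJ1 1) 2
    simp [Matrix.mul_apply, Fin.sum_univ_three, Matrix.one_apply] at h
    linear_combination h
  have q12 : J 1 0 * J⁻¹ 0 2 + J 1 1 * J⁻¹ 1 2 + J 1 2 * J⁻¹ 2 2 = (0:ℝ) := by
    have h := congrFun (congrFun hJ2 1) 2
    simp [Matrix.mul_apply, Fin.sum_univ_three, Matrix.one_apply] at h
    linear_combination h
  have f20 : J⁻¹ 2 0 * J 0 0 + J⁻¹ 2 1 * J 1 0 + J⁻¹ 2 2 * J 2 0 = (0:ℝ) := by
    have h := congrFun (congrFun hJ1 2) 0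
    simp [Matrix.mul_apply, Fin.sum_univ_three, Matrix.one_apply] at h
    linear_combination h
  have q20 : J 2 0 * J⁻¹ 0 0 + J 2 1 * J⁻¹ 1 0 + J 2 2 * J⁻¹ 2 0 = (0:ℝ) := by
    have h := congrFun (congrFun hJ2 2) 0
    simp [Matrix.mul_apply, Fin.sum_univ_three, Matrix.one_apply] at h
    linear_combination h
  have f21 : J⁻¹ 2 0 * J 0 1 + J⁻¹ 2 1 * J 1 1 + J⁻¹ 2 2 * J 2 1 = (0:ℝ) := by
    have h := congrFun (congrFun hJ1 2) 1
    simp [Matrix.mul_apply, Fin.sum_univ_three, Matrix.one_apply] at h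
    linear_combination h
  have q21 : J 2 0 * J⁻¹ 0 1 + J 2 1 * J⁻¹ 1 1 + J 2 2 * J⁻¹ 2 1 = (0:ℝ) := by
    have h := congrFun (congrFun hJ2 2) 1
    simp [Matrix.mul_apply, Fin.sum_univ_three, Matrix.one_apply] at h
    linear_combination h
  have f22 : J⁻¹ 2 0 * J 0 2 + J⁻¹ 2 1 * J 1 2 + J⁻¹ 2 2 * J 2 2 = (1:ℝ) := by
    have h := congrFun (congrFun hJ1 2) 2
    simp [Matrix.mul_apply, Fin.sum_univ_three, Matrix.one_apply] at h
    linear_combination h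
  have q22 : J 2 0 * J⁻¹ 0 2 + J 2 1 * J⁻¹ 1 2 + J 2 2 * J⁻¹ 2 2 = (1:ℝ) := by
    have h := congrFun (congrFun hJ2 2) 2
    simp [Matrix.mul_apply, Fin.sum_univ_three, Matrix.one_apply] at h
    linear_combination h
  set AA := !![-(m⁻¹ * R 0 2), 0, 0, 0, m⁻¹ * R 0 0, m⁻¹ * R 0 1;
      -(m⁻¹ * R 1 2), 0, 0, 0, m⁻¹ * R 1 0, m⁻¹ * R 1 1;
      -(m⁻¹ * R 2 2), 0, 0, 0, m⁻¹ * R 2 0, m⁻¹ * R 2 1;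
      0, J⁻¹ 0 0, J⁻¹ 0 1, J⁻¹ 0 2, 0, 0;
      0, J⁻¹ 1 0, J⁻¹ 1 1, J⁻¹ 1 2, 0, 0;
      0, J⁻¹ 2 0, J⁻¹ 2 1, J⁻¹ 2 2, 0, 0] with hAA
  set BB := !![-(m * R 0 2), -(m * R 1 2), -(m * R 2 2), 0, 0, 0;
      0, 0, 0, J 0 0, J 0 1, J 0 2;
      0, 0, 0, J 1 0, J 1 1, J 1 2;
      0, 0, 0, J 2 0, J 2 1, J 2 2;
      m * R 0 0, m * R 1 0, m * R 2 0, 0, 0, 0;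
      m * R 0 1, m * R 1 1, m * R 2 1, 0, 0, 0] with hBB
  rw [Bbar_eq, Cmat_eq, ← hAA, ← hBB]
  rw [← Matrix.mulᵣ_eq AA BB, ← Matrix.mulᵣ_eq BB AA]
  have g00 : Matrix.mulᵣ AA BB 0 0 = (1:ℝ) := by
    show -(m⁻¹ * R 0 2) * (-(m * R 0 2)) + 0 * 0 + 0 * 0 + 0 * 0 + m⁻¹ * R 0 0 * (m * R 0 0) + m⁻¹ * R 0 1 * (m * R 0 1) = (1:ℝ)
    linear_combination (m⁻¹*m) * e00 + hminv
  have g01 : Matrix.mulᵣ AA BB 0 1 = (0:ℝ) := by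
    show -(m⁻¹ * R 0 2) * (-(m * R 1 2)) + 0 * 0 + 0 * 0 + 0 * 0 + m⁻¹ * R 0 0 * (m * R 1 0) + m⁻¹ * R 0 1 * (m * R 1 1) = (0:ℝ)
    linear_combination (m⁻¹*m) * e01
  have g02 : Matrix.mulᵣ AA BB 0 2 = (0:ℝ) := by
    show -(m⁻¹ * R 0 2) * (-(m * R 2 2)) + 0 * 0 + 0 * 0 + 0 * 0 + m⁻¹ * R 0 0 * (m * R 2 0) + m⁻¹ * R 0 1 * (m * R 2 1) = (0:ℝ)
    linear_combination (m⁻¹*m) * e02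
  have g03 : Matrix.mulᵣ AA BB 0 3 = (0:ℝ) := by
    show -(m⁻¹ * R 0 2) * 0 + 0 * (J 0 0) + 0 * (J 1 0) + 0 * (J 2 0) + m⁻¹ * R 0 0 * 0 + m⁻¹ * R 0 1 * 0 = (0:ℝ)
    ring
  have g04 : Matrix.mulᵣ AA BB 0 4 = (0:ℝ) := by
    show -(m⁻¹ * R 0 2) * 0 + 0 * (J 0 1) + 0 * (J 1 1) + 0 * (J 2 1) + m⁻¹ * R 0 0 * 0 + m⁻¹ * R 0 1 * 0 = (0:ℝ)
    ring
  have g05 : Matrix.mulᵣ AA BB 0 5 = (0:ℝ) := by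
    show -(m⁻¹ * R 0 2) * 0 + 0 * (J 0 2) + 0 * (J 1 2) + 0 * (J 2 2) + m⁻¹ * R 0 0 * 0 + m⁻¹ * R 0 1 * 0 = (0:ℝ)
    ring
  have g10 : Matrix.mulᵣ AA BB 1 0 = (0:ℝ) := by
    show -(m⁻¹ * R 1 2) * (-(m * R 0 2)) + 0 * 0 + 0 * 0 + 0 * 0 + m⁻¹ * R 1 0 * (m * R 0 0) + m⁻¹ * R 1 1 * (m * R 0 1) = (0:ℝ)
    linear_combination (m⁻¹*m) * e10
  have g11 : Matrix.mulᵣ AA BB 1 1 = (1:ℝ) := by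
    show -(m⁻¹ * R 1 2) * (-(m * R 1 2)) + 0 * 0 + 0 * 0 + 0 * 0 + m⁻¹ * R 1 0 * (m * R 1 0) + m⁻¹ * R 1 1 * (m * R 1 1) = (1:ℝ)
    linear_combination (m⁻¹*m) * e11 + hminv
  have g12 : Matrix.mulᵣ AA BB 1 2 = (0:ℝ) := by
    show -(m⁻¹ * R 1 2) * (-(m * R 2 2)) + 0 * 0 + 0 * 0 + 0 * 0 + m⁻¹ * R 1 0 * (m * R 2 0) + m⁻¹ * R 1 1 * (m * R 2 1) = (0:ℝ)
    linear_combination (m⁻¹*m) * e12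
  have g13 : Matrix.mulᵣ AA BB 1 3 = (0:ℝ) := by
    show -(m⁻¹ * R 1 2) * 0 + 0 * (J 0 0) + 0 * (J 1 0) + 0 * (J 2 0) + m⁻¹ * R 1 0 * 0 + m⁻¹ * R 1 1 * 0 = (0:ℝ)
    ring
  have g14 : Matrix.mulᵣ AA BB 1 4 = (0:ℝ) := by
    show -(m⁻¹ * R 1 2) * 0 + 0 * (J 0 1) + 0 * (J 1 1) + 0 * (J 2 1) + m⁻¹ * R 1 0 * 0 + m⁻¹ * R 1 1 * 0 = (0:ℝ)
    ring
  have g15 : Matrix.mulᵣ AA BB 1 5 = (0:ℝ) := by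
    show -(m⁻¹ * R 1 2) * 0 + 0 * (J 0 2) + 0 * (J 1 2) + 0 * (J 2 2) + m⁻¹ * R 1 0 * 0 + m⁻¹ * R 1 1 * 0 = (0:ℝ)
    ring
  have g20 : Matrix.mulᵣ AA BB 2 0 = (0:ℝ) := by
    show -(m⁻¹ * R 2 2) * (-(m * R 0 2)) + 0 * 0 + 0 * 0 + 0 * 0 + m⁻¹ * R 2 0 * (m * R 0 0) + m⁻¹ * R 2 1 * (m * R 0 1) = (0:ℝ)
    linear_combination (m⁻¹*m) * e20
  have g21 : Matrix.mulᵣ AA BB 2 1 = (0:ℝ) := by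
    show -(m⁻¹ * R 2 2) * (-(m * R 1 2)) + 0 * 0 + 0 * 0 + 0 * 0 + m⁻¹ * R 2 0 * (m * R 1 0) + m⁻¹ * R 2 1 * (m * R 1 1) = (0:ℝ)
    linear_combination (m⁻¹*m) * e21
  have g22 : Matrix.mulᵣ AA BB 2 2 = (1:ℝ) := by
    show -(m⁻¹ * R 2 2) * (-(m * R 2 2)) + 0 * 0 + 0 * 0 + 0 * 0 + m⁻¹ * R 2 0 * (m * R 2 0) + m⁻¹ * R 2 1 * (m * R 2 1) = (1:ℝ)
    linear_combination (m⁻¹*m) * e22 + hminv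
  have g23 : Matrix.mulᵣ AA BB 2 3 = (0:ℝ) := by
    show -(m⁻¹ * R 2 2) * 0 + 0 * (J 0 0) + 0 * (J 1 0) + 0 * (J 2 0) + m⁻¹ * R 2 0 * 0 + m⁻¹ * R 2 1 * 0 = (0:ℝ)
    ring
  have g24 : Matrix.mulᵣ AA BB 2 4 = (0:ℝ) := by
    show -(m⁻¹ * R 2 2) * 0 + 0 * (J 0 1) + 0 * (J 1 1) + 0 * (J 2 1) + m⁻¹ * R 2 0 * 0 + m⁻¹ * R 2 1 * 0 = (0:ℝ)
    ring
  have g25 : Matrix.mulᵣ AA BB 2 5 = (0:ℝ) := by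
    show -(m⁻¹ * R 2 2) * 0 + 0 * (J 0 2) + 0 * (J 1 2) + 0 * (J 2 2) + m⁻¹ * R 2 0 * 0 + m⁻¹ * R 2 1 * 0 = (0:ℝ)
    ring
  have g30 : Matrix.mulᵣ AA BB 3 0 = (0:ℝ) := by
    show 0 * (-(m * R 0 2)) + J⁻¹ 0 0 * 0 + J⁻¹ 0 1 * 0 + J⁻¹ 0 2 * 0 + 0 * (m * R 0 0) + 0 * (m * R 0 1) = (0:ℝ)
    ring
  have g31 : Matrix.mulᵣ AA BB 3 1 = (0:ℝ) := by
    show 0 * (-(m * R 1 2)) + J⁻¹ 0 0 * 0 + J⁻¹ 0 1 * 0 + J⁻¹ 0 2 * 0 + 0 * (m * R 1 0) + 0 * (m * R 1 1) = (0:ℝ)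
    ring
  have g32 : Matrix.mulᵣ AA BB 3 2 = (0:ℝ) := by
    show 0 * (-(m * R 2 2)) + J⁻¹ 0 0 * 0 + J⁻¹ 0 1 * 0 + J⁻¹ 0 2 * 0 + 0 * (m * R 2 0) + 0 * (m * R 2 1) = (0:ℝ)
    ring
  have g33 : Matrix.mulᵣ AA BB 3 3 = (1:ℝ) := by
    show 0 * 0 + J⁻¹ 0 0 * (J 0 0) + J⁻¹ 0 1 * (J 1 0) + J⁻¹ 0 2 * (J 2 0) + 0 * 0 + 0 * 0 = (1:ℝ)
    linear_combination f00
  have g34 : Matrix.mulᵣ AA BB 3 4 = (0:ℝ) := by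
    show 0 * 0 + J⁻¹ 0 0 * (J 0 1) + J⁻¹ 0 1 * (J 1 1) + J⁻¹ 0 2 * (J 2 1) + 0 * 0 + 0 * 0 = (0:ℝ)
    linear_combination f01
  have g35 : Matrix.mulᵣ AA BB 3 5 = (0:ℝ) := by
    show 0 * 0 + J⁻¹ 0 0 * (J 0 2) + J⁻¹ 0 1 * (J 1 2) + J⁻¹ 0 2 * (J 2 2) + 0 * 0 + 0 * 0 = (0:ℝ)
    linear_combination f02
  have g40 : Matrix.mulᵣ AA BB 4 0 = (0:ℝ) := by
    show 0 * (-(m * R 0 2)) + J⁻¹ 1 0 * 0 + J⁻¹ 1 1 * 0 + J⁻¹ 1 2 * 0 + 0 * (m * R 0 0) + 0 * (m * R 0 1) = (0:ℝ)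
    ring
  have g41 : Matrix.mulᵣ AA BB 4 1 = (0:ℝ) := by
    show 0 * (-(m * R 1 2)) + J⁻¹ 1 0 * 0 + J⁻¹ 1 1 * 0 + J⁻¹ 1 2 * 0 + 0 * (m * R 1 0) + 0 * (m * R 1 1) = (0:ℝ)
    ring
  have g42 : Matrix.mulᵣ AA BB 4 2 = (0:ℝ) := by
    show 0 * (-(m * R 2 2)) + J⁻¹ 1 0 * 0 + J⁻¹ 1 1 * 0 + J⁻¹ 1 2 * 0 + 0 * (m * R 2 0) + 0 * (m * R 2 1) = (0:ℝ)
    ring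
  have g43 : Matrix.mulᵣ AA BB 4 3 = (0:ℝ) := by
    show 0 * 0 + J⁻¹ 1 0 * (J 0 0) + J⁻¹ 1 1 * (J 1 0) + J⁻¹ 1 2 * (J 2 0) + 0 * 0 + 0 * 0 = (0:ℝ)
    linear_combination f10
  have g44 : Matrix.mulᵣ AA BB 4 4 = (1:ℝ) := by
    show 0 * 0 + J⁻¹ 1 0 * (J 0 1) + J⁻¹ 1 1 * (J 1 1) + J⁻¹ 1 2 * (J 2 1) + 0 * 0 + 0 * 0 = (1:ℝ)
    linear_combination f11
  have g45 : Matrix.mulᵣ AA BB 4 5 = (0:ℝ) := by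
    show 0 * 0 + J⁻¹ 1 0 * (J 0 2) + J⁻¹ 1 1 * (J 1 2) + J⁻¹ 1 2 * (J 2 2) + 0 * 0 + 0 * 0 = (0:ℝ)
    linear_combination f12
  have g50 : Matrix.mulᵣ AA BB 5 0 = (0:ℝ) := by
    show 0 * (-(m * R 0 2)) + J⁻¹ 2 0 * 0 + J⁻¹ 2 1 * 0 + J⁻¹ 2 2 * 0 + 0 * (m * R 0 0) + 0 * (m * R 0 1) = (0:ℝ)
    ring
  have g51 : Matrix.mulᵣ AA BB 5 1 = (0:ℝ) := by
    show 0 * (-(m * R 1 2)) + J⁻¹ 2 0 * 0 + J⁻¹ 2 1 * 0 + J⁻¹ 2 2 * 0 + 0 * (m * R 1 0) + 0 * (m * R 1 1) = (0:ℝ)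
    ring
  have g52 : Matrix.mulᵣ AA BB 5 2 = (0:ℝ) := by
    show 0 * (-(m * R 2 2)) + J⁻¹ 2 0 * 0 + J⁻¹ 2 1 * 0 + J⁻¹ 2 2 * 0 + 0 * (m * R 2 0) + 0 * (m * R 2 1) = (0:ℝ)
    ring
  have g53 : Matrix.mulᵣ AA BB 5 3 = (0:ℝ) := by
    show 0 * 0 + J⁻¹ 2 0 * (J 0 0) + J⁻¹ 2 1 * (J 1 0) + J⁻¹ 2 2 * (J 2 0) + 0 * 0 + 0 * 0 = (0:ℝ)
    linear_combination f20
  have g54 : Matrix.mulᵣ AA BB 5 4 = (0:ℝ) := by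
    show 0 * 0 + J⁻¹ 2 0 * (J 0 1) + J⁻¹ 2 1 * (J 1 1) + J⁻¹ 2 2 * (J 2 1) + 0 * 0 + 0 * 0 = (0:ℝ)
    linear_combination f21
  have g55 : Matrix.mulᵣ AA BB 5 5 = (1:ℝ) := by
    show 0 * 0 + J⁻¹ 2 0 * (J 0 2) + J⁻¹ 2 1 * (J 1 2) + J⁻¹ 2 2 * (J 2 2) + 0 * 0 + 0 * 0 = (1:ℝ)
    linear_combination f22
  have h00 : Matrix.mulᵣ BB AA 0 0 = (1:ℝ) := by
    show -(m * R 0 2) * (-(m⁻¹ * R 0 2)) + -(m * R 1 2) * (-(m⁻¹ * R 1 2)) + -(m * R 2 2) * (-(m⁻¹ * R 2 2)) + 0 * 0 + 0 * 0 + 0 * 0 = (1:ℝ)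
    linear_combination (m*m⁻¹) * c22 + hminv'
  have h01 : Matrix.mulᵣ BB AA 0 1 = (0:ℝ) := by
    show -(m * R 0 2) * 0 + -(m * R 1 2) * 0 + -(m * R 2 2) * 0 + 0 * (J⁻¹ 0 0) + 0 * (J⁻¹ 1 0) + 0 * (J⁻¹ 2 0) = (0:ℝ)
    ring
  have h02 : Matrix.mulᵣ BB AA 0 2 = (0:ℝ) := by
    show -(m * R 0 2) * 0 + -(m * R 1 2) * 0 + -(m * R 2 2) * 0 + 0 * (J⁻¹ 0 1) + 0 * (J⁻¹ 1 1) + 0 * (J⁻¹ 2 1) = (0:ℝ)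
    ring
  have h03 : Matrix.mulᵣ BB AA 0 3 = (0:ℝ) := by
    show -(m * R 0 2) * 0 + -(m * R 1 2) * 0 + -(m * R 2 2) * 0 + 0 * (J⁻¹ 0 2) + 0 * (J⁻¹ 1 2) + 0 * (J⁻¹ 2 2) = (0:ℝ)
    ring
  have h04 : Matrix.mulᵣ BB AA 0 4 = (0:ℝ) := by
    show -(m * R 0 2) * (m⁻¹ * R 0 0) + -(m * R 1 2) * (m⁻¹ * R 1 0) + -(m * R 2 2) * (m⁻¹ * R 2 0) + 0 * 0 + 0 * 0 + 0 * 0 = (0:ℝ)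
    linear_combination -(m*m⁻¹) * c20
  have h05 : Matrix.mulᵣ BB AA 0 5 = (0:ℝ) := by
    show -(m * R 0 2) * (m⁻¹ * R 0 1) + -(m * R 1 2) * (m⁻¹ * R 1 1) + -(m * R 2 2) * (m⁻¹ * R 2 1) + 0 * 0 + 0 * 0 + 0 * 0 = (0:ℝ)
    linear_combination -(m*m⁻¹) * c21
  have h10 : Matrix.mulᵣ BB AA 1 0 = (0:ℝ) := by
    show 0 * (-(m⁻¹ * R 0 2)) + 0 * (-(m⁻¹ * R 1 2)) + 0 * (-(m⁻¹ * R 2 2)) + J 0 0 * 0 + J 0 1 * 0 + J 0 2 * 0 = (0:ℝ)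
    ring
  have h11 : Matrix.mulᵣ BB AA 1 1 = (1:ℝ) := by
    show 0 * 0 + 0 * 0 + 0 * 0 + J 0 0 * (J⁻¹ 0 0) + J 0 1 * (J⁻¹ 1 0) + J 0 2 * (J⁻¹ 2 0) = (1:ℝ)
    linear_combination q00
  have h12 : Matrix.mulᵣ BB AA 1 2 = (0:ℝ) := by
    show 0 * 0 + 0 * 0 + 0 * 0 + J 0 0 * (J⁻¹ 0 1) + J 0 1 * (J⁻¹ 1 1) + J 0 2 * (J⁻¹ 2 1) = (0:ℝ)
    linear_combination q01
  have h13 : Matrix.mulᵣ BB AA 1 3 = (0:ℝ) := by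
    show 0 * 0 + 0 * 0 + 0 * 0 + J 0 0 * (J⁻¹ 0 2) + J 0 1 * (J⁻¹ 1 2) + J 0 2 * (J⁻¹ 2 2) = (0:ℝ)
    linear_combination q02
  have h14 : Matrix.mulᵣ BB AA 1 4 = (0:ℝ) := by
    show 0 * (m⁻¹ * R 0 0) + 0 * (m⁻¹ * R 1 0) + 0 * (m⁻¹ * R 2 0) + J 0 0 * 0 + J 0 1 * 0 + J 0 2 * 0 = (0:ℝ)
    ring
  have h15 : Matrix.mulᵣ BB AA 1 5 = (0:ℝ) := by
    show 0 * (m⁻¹ * R 0 1) + 0 * (m⁻¹ * R 1 1) + 0 * (m⁻¹ * R 2 1) + J 0 0 * 0 + J 0 1 * 0 + J 0 2 * 0 = (0:ℝ)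
    ring
  have h20 : Matrix.mulᵣ BB AA 2 0 = (0:ℝ) := by
    show 0 * (-(m⁻¹ * R 0 2)) + 0 * (-(m⁻¹ * R 1 2)) + 0 * (-(m⁻¹ * R 2 2)) + J 1 0 * 0 + J 1 1 * 0 + J 1 2 * 0 = (0:ℝ)
    ring
  have h21 : Matrix.mulᵣ BB AA 2 1 = (0:ℝ) := by
    show 0 * 0 + 0 * 0 + 0 * 0 + J 1 0 * (J⁻¹ 0 0) + J 1 1 * (J⁻¹ 1 0) + J 1 2 * (J⁻¹ 2 0) = (0:ℝ)
    linear_combination q10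
  have h22 : Matrix.mulᵣ BB AA 2 2 = (1:ℝ) := by
    show 0 * 0 + 0 * 0 + 0 * 0 + J 1 0 * (J⁻¹ 0 1) + J 1 1 * (J⁻¹ 1 1) + J 1 2 * (J⁻¹ 2 1) = (1:ℝ)
    linear_combination q11
  have h23 : Matrix.mulᵣ BB AA 2 3 = (0:ℝ) := by
    show 0 * 0 + 0 * 0 + 0 * 0 + J 1 0 * (J⁻¹ 0 2) + J 1 1 * (J⁻¹ 1 2) + J 1 2 * (J⁻¹ 2 2) = (0:ℝ)
    linear_combination q12
  have h24 : Matrix.mulᵣ BB AA 2 4 = (0:ℝ) := by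
    show 0 * (m⁻¹ * R 0 0) + 0 * (m⁻¹ * R 1 0) + 0 * (m⁻¹ * R 2 0) + J 1 0 * 0 + J 1 1 * 0 + J 1 2 * 0 = (0:ℝ)
    ring
  have h25 : Matrix.mulᵣ BB AA 2 5 = (0:ℝ) := by
    show 0 * (m⁻¹ * R 0 1) + 0 * (m⁻¹ * R 1 1) + 0 * (m⁻¹ * R 2 1) + J 1 0 * 0 + J 1 1 * 0 + J 1 2 * 0 = (0:ℝ)
    ring
  have h30 : Matrix.mulᵣ BB AA 3 0 = (0:ℝ) := by
    show 0 * (-(m⁻¹ * R 0 2)) + 0 * (-(m⁻¹ * R 1 2)) + 0 * (-(m⁻¹ * R 2 2)) + J 2 0 * 0 + J 2 1 * 0 + J 2 2 * 0 = (0:ℝ)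
    ring
  have h31 : Matrix.mulᵣ BB AA 3 1 = (0:ℝ) := by
    show 0 * 0 + 0 * 0 + 0 * 0 + J 2 0 * (J⁻¹ 0 0) + J 2 1 * (J⁻¹ 1 0) + J 2 2 * (J⁻¹ 2 0) = (0:ℝ)
    linear_combination q20
  have h32 : Matrix.mulᵣ BB AA 3 2 = (0:ℝ) := by
    show 0 * 0 + 0 * 0 + 0 * 0 + J 2 0 * (J⁻¹ 0 1) + J 2 1 * (J⁻¹ 1 1) + J 2 2 * (J⁻¹ 2 1) = (0:ℝ)
    linear_combination q21
  have h33 : Matrix.mulᵣ BB AA 3 3 = (1:ℝ) := by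
    show 0 * 0 + 0 * 0 + 0 * 0 + J 2 0 * (J⁻¹ 0 2) + J 2 1 * (J⁻¹ 1 2) + J 2 2 * (J⁻¹ 2 2) = (1:ℝ)
    linear_combination q22
  have h34 : Matrix.mulᵣ BB AA 3 4 = (0:ℝ) := by
    show 0 * (m⁻¹ * R 0 0) + 0 * (m⁻¹ * R 1 0) + 0 * (m⁻¹ * R 2 0) + J 2 0 * 0 + J 2 1 * 0 + J 2 2 * 0 = (0:ℝ)
    ring
  have h35 : Matrix.mulᵣ BB AA 3 5 = (0:ℝ) := by
    show 0 * (m⁻¹ * R 0 1) + 0 * (m⁻¹ * R 1 1) + 0 * (m⁻¹ * R 2 1) + J 2 0 * 0 + J 2 1 * 0 + J 2 2 * 0 = (0:ℝ)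
    ring
  have h40 : Matrix.mulᵣ BB AA 4 0 = (0:ℝ) := by
    show m * R 0 0 * (-(m⁻¹ * R 0 2)) + m * R 1 0 * (-(m⁻¹ * R 1 2)) + m * R 2 0 * (-(m⁻¹ * R 2 2)) + 0 * 0 + 0 * 0 + 0 * 0 = (0:ℝ)
    linear_combination -(m*m⁻¹) * c02
  have h41 : Matrix.mulᵣ BB AA 4 1 = (0:ℝ) := by
    show m * R 0 0 * 0 + m * R 1 0 * 0 + m * R 2 0 * 0 + 0 * (J⁻¹ 0 0) + 0 * (J⁻¹ 1 0) + 0 * (J⁻¹ 2 0) = (0:ℝ)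
    ring
  have h42 : Matrix.mulᵣ BB AA 4 2 = (0:ℝ) := by
    show m * R 0 0 * 0 + m * R 1 0 * 0 + m * R 2 0 * 0 + 0 * (J⁻¹ 0 1) + 0 * (J⁻¹ 1 1) + 0 * (J⁻¹ 2 1) = (0:ℝ)
    ring
  have h43 : Matrix.mulᵣ BB AA 4 3 = (0:ℝ) := by
    show m * R 0 0 * 0 + m * R 1 0 * 0 + m * R 2 0 * 0 + 0 * (J⁻¹ 0 2) + 0 * (J⁻¹ 1 2) + 0 * (J⁻¹ 2 2) = (0:ℝ)
    ring
  have h44 : Matrix.mulᵣ BB AA 4 4 = (1:ℝ) := by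
    show m * R 0 0 * (m⁻¹ * R 0 0) + m * R 1 0 * (m⁻¹ * R 1 0) + m * R 2 0 * (m⁻¹ * R 2 0) + 0 * 0 + 0 * 0 + 0 * 0 = (1:ℝ)
    linear_combination (m*m⁻¹) * c00 + hminv'
  have h45 : Matrix.mulᵣ BB AA 4 5 = (0:ℝ) := by
    show m * R 0 0 * (m⁻¹ * R 0 1) + m * R 1 0 * (m⁻¹ * R 1 1) + m * R 2 0 * (m⁻¹ * R 2 1) + 0 * 0 + 0 * 0 + 0 * 0 = (0:ℝ)
    linear_combination (m*m⁻¹) * c01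
  have h50 : Matrix.mulᵣ BB AA 5 0 = (0:ℝ) := by
    show m * R 0 1 * (-(m⁻¹ * R 0 2)) + m * R 1 1 * (-(m⁻¹ * R 1 2)) + m * R 2 1 * (-(m⁻¹ * R 2 2)) + 0 * 0 + 0 * 0 + 0 * 0 = (0:ℝ)
    linear_combination -(m*m⁻¹) * c12
  have h51 : Matrix.mulᵣ BB AA 5 1 = (0:ℝ) := by
    show m * R 0 1 * 0 + m * R 1 1 * 0 + m * R 2 1 * 0 + 0 * (J⁻¹ 0 0) + 0 * (J⁻¹ 1 0) + 0 * (J⁻¹ 2 0) = (0:ℝ)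
    ring
  have h52 : Matrix.mulᵣ BB AA 5 2 = (0:ℝ) := by
    show m * R 0 1 * 0 + m * R 1 1 * 0 + m * R 2 1 * 0 + 0 * (J⁻¹ 0 1) + 0 * (J⁻¹ 1 1) + 0 * (J⁻¹ 2 1) = (0:ℝ)
    ring
  have h53 : Matrix.mulᵣ BB AA 5 3 = (0:ℝ) := by
    show m * R 0 1 * 0 + m * R 1 1 * 0 + m * R 2 1 * 0 + 0 * (J⁻¹ 0 2) + 0 * (J⁻¹ 1 2) + 0 * (J⁻¹ 2 2) = (0:ℝ)
    ring
  have h54 : Matrix.mulᵣ BB AA 5 4 = (0:ℝ) := by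
    show m * R 0 1 * (m⁻¹ * R 0 0) + m * R 1 1 * (m⁻¹ * R 1 0) + m * R 2 1 * (m⁻¹ * R 2 0) + 0 * 0 + 0 * 0 + 0 * 0 = (0:ℝ)
    linear_combination (m*m⁻¹) * c10
  have h55 : Matrix.mulᵣ BB AA 5 5 = (1:ℝ) := by
    show m * R 0 1 * (m⁻¹ * R 0 1) + m * R 1 1 * (m⁻¹ * R 1 1) + m * R 2 1 * (m⁻¹ * R 2 1) + 0 * 0 + 0 * 0 + 0 * 0 = (1:ℝ)
    linear_combination (m*m⁻¹) * c11 + hminv'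
  refine ⟨?_, ?_⟩
  · ext i j
    fin_cases i <;> fin_cases j
    exacts [g00, g01, g02, g03, g04, g05, g10, g11, g12, g13, g14, g15, g20, g21, g22, g23, g24, g25, g30, g31, g32, g33, g34, g35, g40, g41, g42, g43, g44, g45, g50, g51, g52, g53, g54, g55]
  · ext i j
    fin_cases i <;> fin_cases j
    exacts [h00, h01, h02, h03, h04, h05, h10, h11, h12, h13, h14, h15, h20, h21, h22, h23, h24, h25, h30, h31, h32, h33, h34, h35, h40, h41, h42, h43, h44, h45, h50, h51, h52, h53, h54, h55]


lemma opnorm_aux {n : ℕ} (hn : 1 ≤ (n:ℝ)) (A : Matrix (Fin n) (Fin n) ℝ) (M : ℝ) (hM : 0 ≤ M)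
    (h : ∀ i j, |A i j| ≤ M) :
    ‖Matrix.toEuclideanCLM (𝕜 := ℝ) A‖ ≤ (n:ℝ)^2 * M := by
  apply ContinuousLinearMap.opNorm_le_bound _ (by positivity)
  intro x
  have hx : ∀ j, |x j| ≤ ‖x‖ := by
    intro j
    rw [EuclideanSpace.norm_eq]
    have : |x j| = Real.sqrt (|x j|^2) := by rw [Real.sqrt_sq_eq_abs, abs_abs]
    rw [this]
    apply Real.sqrt_le_sqrt
    have := Finset.single_le_sum (f := fun j => ‖x j‖^2) (fun i _ => by positivity)
      (Finset.mem_univ j)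
    simpa [Real.norm_eq_abs] using this
  have hAx : ∀ i, |(Matrix.toEuclideanCLM (𝕜 := ℝ) A x) i| ≤ (n:ℝ) * M * ‖x‖ := by
    intro i
    have he : (Matrix.toEuclideanCLM (𝕜 := ℝ) A x) i = ∑ j, A i j * x j := by
      have := congrFun (Matrix.ofLp_toEuclideanCLM (𝕜 := ℝ) A x) i
      simpa [Matrix.toLin'_apply, Matrix.mulVec, dotProduct] using this
    rw [he]
    calc |∑ j, A i j * x j| ≤ ∑ j, |A i j * x j| := Finset.abs_sum_le_sum_abs _ _
      _ ≤ ∑ _j : Fin n, M * ‖x‖ := by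
          apply Finset.sum_le_sum
          intro j _
          rw [abs_mul]
          exact mul_le_mul (h i j) (hx j) (abs_nonneg _) hM
      _ = (n:ℝ) * M * ‖x‖ := by simp [mul_assoc]
  rw [EuclideanSpace.norm_eq]
  calc Real.sqrt (∑ i, ‖(Matrix.toEuclideanCLM (𝕜 := ℝ) A x) i‖^2)
      ≤ Real.sqrt (∑ _i : Fin n, ((n:ℝ) * M * ‖x‖)^2) := by
        apply Real.sqrt_le_sqrt
        apply Finset.sum_le_sum
        intro i _
        rw [Real.norm_eq_abs]
        exact pow_le_pow_left₀ (abs_nonneg _) (hAx i) 2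
    _ = Real.sqrt ((n:ℝ)) * ((n:ℝ) * M * ‖x‖) := by
        rw [Finset.sum_const, Finset.card_univ, Fintype.card_fin, nsmul_eq_mul,
          Real.sqrt_mul (by positivity), Real.sqrt_sq (by positivity)]
    _ ≤ (n:ℝ) * ((n:ℝ) * M * ‖x‖) := by
        apply mul_le_mul_of_nonneg_right _ (by positivity)
        calc Real.sqrt (n:ℝ) ≤ Real.sqrt ((n:ℝ)^2) := Real.sqrt_le_sqrt (by nlinarith)
          _ = (n:ℝ) := Real.sqrt_sq (by positivity)
    _ = (n:ℝ)^2 * M * ‖x‖ := by ring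

lemma abs_entry_le (M : Matrix (Fin 3) (Fin 3) ℝ) (a b : Fin 3) :
    |M a b| ≤ ∑ i, ∑ j, |M i j| :=
  calc |M a b| ≤ ∑ j, |M a j| :=
        Finset.single_le_sum (f := fun j => |M a j|) (fun j _ => abs_nonneg _)
          (Finset.mem_univ b)
    _ ≤ ∑ i, ∑ j, |M i j| :=
        Finset.single_le_sum (f := fun i => ∑ j, |M i j|)
          (fun i _ => Finset.sum_nonneg fun j _ => abs_nonneg _) (Finset.mem_univ a)

lemma rot_entry_le (R : Matrix (Fin 3) (Fin 3) ℝ) (hR : Rᵀ * R = 1) (a b : Fin 3) :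
    |R a b| ≤ 1 := by
  have hR' : R * Rᵀ = 1 := mul_eq_one_comm.mp hR
  have h := congrFun (congrFun hR' a) a
  simp [Matrix.mul_apply, Fin.sum_univ_three, Matrix.transpose_apply, Matrix.one_apply] at h
  rw [abs_le_one_iff_mul_self_le_one]
  have hsum : ∑ j, R a j * R a j = (1:ℝ) := by
    rw [Fin.sum_univ_three]; linarith [h]
  calc R a b * R a b ≤ ∑ j, R a j * R a j :=
        Finset.single_le_sum (f := fun j => R a j * R a j)
          (fun j _ => mul_self_nonneg _) (Finset.mem_univ b)
    _ = 1 := hsum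

/-- Proposition 2 of the paper. For `m > 0` and `J` an invertible
real 3×3 matrix, there are positive constants `Δ_B̄`, `Δ_B̄inv` such that for every
rotation matrix `R ∈ SO(3)`, the matrix `B̄(R)` is invertible, its `ℓ²` operator norm
is at most `Δ_B̄`, and the operator norm of its inverse is at most `Δ_B̄inv`. -/
theorem bbar_bounded_and_invertible (m : ℝ) (hm : 0 < m)
    (J : Matrix (Fin 3) (Fin 3) ℝ) (hJ : IsUnit J) :
    ∃ ΔB > (0 : ℝ), ∃ ΔBinv > (0 : ℝ),
      ∀ R : Matrix (Fin 3) (Fin 3) ℝ, Rᵀ * R = 1 → R.det = 1 →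
        IsUnit (Bbar m J R) ∧
        ‖Matrix.toEuclideanCLM (𝕜 := ℝ) (Bbar m J R)‖ ≤ ΔB ∧
        ‖Matrix.toEuclideanCLM (𝕜 := ℝ) ((Bbar m J R)⁻¹)‖ ≤ ΔBinv := by

  have hm' : 0 < m⁻¹ := inv_pos.mpr hm
  set S : ℝ := ∑ i, ∑ j, |J⁻¹ i j| with hS
  set T : ℝ := ∑ i, ∑ j, |J i j| with hT
  have hS0 : 0 ≤ S := Finset.sum_nonneg fun i _ => Finset.sum_nonneg fun j _ => abs_nonneg _
  have hT0 : 0 ≤ T := Finset.sum_nonneg fun i _ => Finset.sum_nonneg fun j _ => abs_nonneg _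
  refine ⟨((6:ℕ):ℝ)^2 * (m⁻¹ + S), by positivity, ((6:ℕ):ℝ)^2 * (m + T), by positivity, ?_⟩
  intro R hR _hdet
  obtain ⟨hAB, hBA⟩ := mul_ids m hm.ne' J R hJ hR
  have hinv : (Bbar m J R)⁻¹ = Cmat m J R := Matrix.inv_eq_right_inv hAB
  have hdet : IsUnit (Bbar m J R).det := by
    apply IsUnit.of_mul_eq_one (Cmat m J R).det
    rw [← Matrix.det_mul, hAB, Matrix.det_one]
  have hRb := rot_entry_le R hR
  have hBbd : ∀ i j, |Bbar m J R i j| ≤ m⁻¹ + S := by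
    have key : ∀ a b : Fin 3, |m⁻¹ * R a b| ≤ m⁻¹ := by
      intro a b
      rw [abs_mul, abs_of_nonneg hm'.le]
      nlinarith [hRb a b, abs_nonneg (R a b)]
    intro i j
    simp only [Bbar, Matrix.of_apply]
    split_ifs
    · rw [abs_neg]; exact (key _ _).trans (by linarith)
    · exact (key _ _).trans (by linarith)
    · exact (key _ _).trans (by linarith)
    · simpa using add_nonneg hm'.le hS0
    · exact (abs_entry_le _ _ _).trans (by linarith)
    · simpa using add_nonneg hm'.le hS0
  have hCbd : ∀ i j, |Cmat m J R i j| ≤ m + T := by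
    have key : ∀ a b : Fin 3, |m * R a b| ≤ m := by
      intro a b
      rw [abs_mul, abs_of_nonneg hm.le]
      nlinarith [hRb a b, abs_nonneg (R a b)]
    intro i j
    simp only [Cmat, Matrix.of_apply]
    split_ifs
    · rw [abs_neg]; exact (key _ _).trans (by linarith)
    · exact (key _ _).trans (by linarith)
    · exact (key _ _).trans (by linarith)
    · simpa using add_nonneg hm.le hT0
    · exact (abs_entry_le _ _ _).trans (by linarith)
    · simpa using add_nonneg hm.le hT0
  refine ⟨(Matrix.isUnit_iff_isUnit_det _).mpr hdet, ?_, ?_⟩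
  · exact opnorm_aux (by norm_num) _ _ (by positivity) hBbd
  · rw [hinv]
    exact opnorm_aux (by norm_num) _ _ (by positivity) hCbd
end

section
/- Let A be an invertible real n×n matrix, T > 0 a real number such that exp(AT) − I is invertible, B̄ an invertible real n×n matrix, and z̃ ∈ ℝⁿ. Define Φ = A⁻¹(exp(AT) − I) and σ̂ = −B̄⁻¹ Φ⁻¹ exp(AT) z̃. Then exp(AT) z̃ + (exp(AT) − I) A⁻¹ B̄ σ̂ = 0. -/
open scoped Matrix

/-- the key cancellation property of the piecewise-constant
adaptation law. With `Φ = A⁻¹(exp(AT) − I)` and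
`σ̂ = −B̄⁻¹ Φ⁻¹ exp(AT) z̃`, we have `exp(AT) z̃ + (exp(AT) − I) A⁻¹ B̄ σ̂ = 0`. -/
theorem adaptation_law_cancellation {n : ℕ}
    (A : Matrix (Fin n) (Fin n) ℝ) (hA : IsUnit A)
    (T : ℝ) (hT : 0 < T)
    (hexp : IsUnit (NormedSpace.exp (T • A) - 1))
    (Bbar : Matrix (Fin n) (Fin n) ℝ) (hB : IsUnit Bbar)
    (ztil : Fin n → ℝ)
    (Φ : Matrix (Fin n) (Fin n) ℝ)
    (hΦ : Φ = A⁻¹ * (NormedSpace.exp (T • A) - 1))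
    (σhat : Fin n → ℝ)
    (hσhat : σhat = -((Bbar⁻¹ * Φ⁻¹).mulVec ((NormedSpace.exp (T • A)).mulVec ztil))) :
    (NormedSpace.exp (T • A)).mulVec ztil
      + ((NormedSpace.exp (T • A) - 1) * A⁻¹ * Bbar).mulVec σhat = 0 := by
  set E : Matrix (Fin n) (Fin n) ℝ := NormedSpace.exp (T • A) - 1 with hE
  have hAdet : IsUnit A.det := (Matrix.isUnit_iff_isUnit_det A).mp hA
  have hEdet : IsUnit E.det := (Matrix.isUnit_iff_isUnit_det E).mp hexp
  have hBdet : IsUnit Bbar.det := (Matrix.isUnit_iff_isUnit_det Bbar).mp hB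
  -- A commutes with E
  have hcomm : A * E = E * A := by
    have h1 : Commute A (NormedSpace.exp (T • A)) :=
      ((Commute.refl A).smul_right T).exp_right
    simp [hE, Matrix.mul_sub, Matrix.sub_mul, h1.eq]
  have hcomm' : A⁻¹ * E = E * A⁻¹ := by
    calc A⁻¹ * E = A⁻¹ * E * A * A⁻¹ := by
          rw [Matrix.mul_nonsing_inv_cancel_right _ _ hAdet]
      _ = A⁻¹ * (E * A) * A⁻¹ := by rw [Matrix.mul_assoc A⁻¹]
      _ = A⁻¹ * (A * E) * A⁻¹ := by rw [hcomm]
      _ = E * A⁻¹ := by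
          rw [← Matrix.mul_assoc, Matrix.nonsing_inv_mul _ hAdet, Matrix.one_mul]
  have hΦinv : Φ⁻¹ = E⁻¹ * A := by
    rw [hΦ, Matrix.mul_inv_rev, Matrix.nonsing_inv_nonsing_inv _ hAdet]
  have key : E * A⁻¹ * Bbar * Bbar⁻¹ * Φ⁻¹ = 1 := by
    rw [Matrix.mul_nonsing_inv_cancel_right _ _ hBdet, hΦinv, ← hcomm',
      ← Matrix.mul_assoc, Matrix.mul_nonsing_inv_cancel_right _ _ hEdet,
      Matrix.nonsing_inv_mul _ hAdet]
  rw [hσhat, Matrix.mulVec_neg, Matrix.mulVec_mulVec, ← Matrix.mul_assoc, key]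
  simp
end

section
/- Let A = diag(λ₁, …, λ₆) be a diagonal real 6×6 matrix with λᵢ < 0 for every i, let a < b be real numbers, let B̄ : [a,b] → ℝ⁶ˣ⁶ and σ : [a,b] → ℝ⁶ be continuous, and assume B̄(a) is invertible. Define T = b − a, Φ = A⁻¹(exp(AT) − I), and σ̂₀ = −B̄(a)⁻¹ Φ⁻¹ exp(AT) z̃(a), where z̃ : [a,b] → ℝ⁶ is a differentiable function satisfying z̃′(t) = A z̃(t) + B̄(t)(σ̂₀ − σ(t)) for all t ∈ [a,b]. Then there exist τ₁, …, τ₆ ∈ [a,b] and β₁, …, β₆ ∈ [a,b] such that for every i ∈ {1,…,6}, the i-th component of z̃(b) equals ((1 − exp(λᵢ T))/λᵢ) · [ (B̄(τᵢ) σ(τᵢ))ᵢ − ((B̄(βᵢ) − B̄(a)) σ̂₀)ᵢ ], where (·)ᵢ denotes the i-th component of a vector in ℝ⁶. -/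
open scoped Matrix

open scoped Matrix
open intervalIntegral Set

/-- exp of diagonal computed. -/
lemma exp_smul_diag (T : ℝ) (lam : Fin 6 → ℝ) :
    NormedSpace.exp (T • Matrix.diagonal lam)
      = Matrix.diagonal (fun i => Real.exp (T * lam i)) := by
  have h1 : T • Matrix.diagonal lam = Matrix.diagonal (fun i => T * lam i) := by
    rw [show (fun i => T * lam i) = T • lam from rfl, Matrix.diagonal_smul]
  rw [h1, Matrix.exp_diagonal, Pi.exp_def]
  funext i
  rw [Real.exp_eq_exp_ℝ]

/-- weighted mean value theorem for integrals. -/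
lemma weighted_mvt (a b : ℝ) (hab : a < b) (w h : ℝ → ℝ)
    (hw : ContinuousOn w (Set.Icc a b)) (hwpos : ∀ s ∈ Set.Icc a b, 0 < w s)
    (hh : ContinuousOn h (Set.Icc a b)) :
    ∃ c ∈ Set.Icc a b, (∫ s in a..b, w s * h s) = h c * ∫ s in a..b, w s := by
  have huIcc : Set.uIcc a b = Set.Icc a b := Set.uIcc_of_le hab.le
  have hwi : IntervalIntegrable w MeasureTheory.volume a b :=
    (huIcc ▸ hw).intervalIntegrable
  have hwhi : IntervalIntegrable (fun s => w s * h s) MeasureTheory.volume a b :=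
    (huIcc ▸ (hw.mul hh)).intervalIntegrable
  have hWpos : 0 < ∫ s in a..b, w s :=
    intervalIntegral.intervalIntegral_pos_of_pos_on hwi
      (fun x hx => hwpos x (Set.Ioo_subset_Icc_self hx)) hab
  obtain ⟨p, hp, hpmin⟩ := (isCompact_Icc (a := a) (b := b)).exists_isMinOn
    (Set.nonempty_Icc.2 hab.le) hh
  obtain ⟨q, hq, hqmax⟩ := (isCompact_Icc (a := a) (b := b)).exists_isMaxOn
    (Set.nonempty_Icc.2 hab.le) hh
  set W := ∫ s in a..b, w s with hW
  set I := ∫ s in a..b, w s * h s with hI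
  have hlow : h p * W ≤ I := by
    rw [hW, ← intervalIntegral.integral_const_mul]
    refine intervalIntegral.integral_mono_on hab.le ?_ hwhi ?_
    · exact ContinuousOn.intervalIntegrable (by rw [huIcc]; exact continuousOn_const.mul hw)
    · intro x hx
      have := hpmin hx
      have hwx := (hwpos x hx).le
      calc h p * w x ≤ h x * w x := by exact mul_le_mul_of_nonneg_right this hwx
        _ = w x * h x := mul_comm _ _
  have hhigh : I ≤ h q * W := by
    rw [hW, ← intervalIntegral.integral_const_mul]
    refine intervalIntegral.integral_mono_on hab.le hwhi ?_ ?_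
    · exact ContinuousOn.intervalIntegrable (by rw [huIcc]; exact continuousOn_const.mul hw)
    · intro x hx
      have := hqmax hx
      have hwx := (hwpos x hx).le
      calc w x * h x = h x * w x := mul_comm _ _
        _ ≤ h q * w x := mul_le_mul_of_nonneg_right this hwx
  have hmem : I / W ∈ Set.uIcc (h p) (h q) := by
    have h1 : h p ≤ I / W := (le_div_iff₀ hWpos).2 hlow
    have h2 : I / W ≤ h q := (div_le_iff₀ hWpos).2 hhigh
    exact Set.mem_uIcc.2 (Or.inl ⟨h1, h2⟩)
  have hsub : Set.uIcc p q ⊆ Set.Icc a b := Set.uIcc_subset_Icc hp hq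
  obtain ⟨c, hc, hcv⟩ := intermediate_value_uIcc (hh.mono hsub) hmem
  refine ⟨c, hsub hc, ?_⟩
  rw [hcv]
  field_simp

/-- solution formula for scalar linear ODE. -/
lemma linear_ode_sol (a b L : ℝ) (hab : a ≤ b) (u f : ℝ → ℝ)
    (hf : ContinuousOn f (Set.Icc a b))
    (hu : ∀ t ∈ Set.Icc a b, HasDerivAt u (L * u t + f t) t) :
    u b = Real.exp (L * (b - a)) * u a + ∫ s in a..b, Real.exp (L * (b - s)) * f s := by
  have huIcc : Set.uIcc a b = Set.Icc a b := Set.uIcc_of_le hab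
  have hcexp : Continuous fun s : ℝ => Real.exp (-L * s) :=
    (Real.continuous_exp.comp (continuous_const.mul continuous_id))
  have hg : ∀ t ∈ Set.uIcc a b,
      HasDerivAt (fun s => Real.exp (-L * s) * u s) (Real.exp (-L * t) * f t) t := by
    intro t ht
    rw [huIcc] at ht
    have h1 : HasDerivAt (fun s : ℝ => Real.exp (-L * s)) (Real.exp (-L * t) * (-L)) t := by
      simpa using ((hasDerivAt_id t).const_mul (-L)).exp
    have := h1.mul (hu t ht)
    refine this.congr_deriv ?_
    ring
  have hint : IntervalIntegrable (fun s => Real.exp (-L * s) * f s) MeasureTheory.volume a b := by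
    apply ContinuousOn.intervalIntegrable
    rw [huIcc]
    exact (hcexp.continuousOn).mul hf
  have hftc := intervalIntegral.integral_eq_sub_of_hasDerivAt hg hint
  have key : ∫ s in a..b, Real.exp (L * (b - s)) * f s
      = Real.exp (L * b) * ∫ s in a..b, Real.exp (-L * s) * f s := by
    rw [← intervalIntegral.integral_const_mul]
    apply intervalIntegral.integral_congr
    intro s _
    show Real.exp (L * (b - s)) * f s = Real.exp (L * b) * (Real.exp (-L * s) * f s)
    rw [← mul_assoc, ← Real.exp_add]
    ring_nf
  rw [key, hftc]
  have e1 : Real.exp (L * b) * Real.exp (-L * b) = 1 := by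
    rw [← Real.exp_add]; ring_nf; exact Real.exp_zero
  have e2 : Real.exp (L * b) * Real.exp (-L * a) = Real.exp (L * (b - a)) := by
    rw [← Real.exp_add]; ring_nf
  linear_combination u a * e2 - u b * e1

/-- integral of the exponential weight. -/
lemma exp_weight_integral (a b L : ℝ) (hL : L ≠ 0) :
    ∫ s in a..b, Real.exp (L * (b - s)) = (Real.exp (L * (b - a)) - 1) / L := by
  have hg : ∀ t ∈ Set.uIcc a b,
      HasDerivAt (fun s => -(Real.exp (L * (b - s)) / L)) (Real.exp (L * (b - t))) t := by
    intro t _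
    have h1 : HasDerivAt (fun s : ℝ => L * (b - s)) (-L) t := by
      have := ((hasDerivAt_id t).const_sub b).const_mul L
      refine this.congr_deriv ?_; ring
    have h2 := (h1.exp.div_const L).neg
    refine h2.congr_deriv ?_
    field_simp
  have hint : IntervalIntegrable (fun s => Real.exp (L * (b - s))) MeasureTheory.volume a b :=
    (Real.continuous_exp.comp (continuous_const.mul (continuous_const.sub continuous_id))).continuousOn.intervalIntegrable
  have := intervalIntegral.integral_eq_sub_of_hasDerivAt hg hint
  rw [this]
  have : L * (b - b) = 0 := by ring
  rw [this, Real.exp_zero]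
  field_simp
  ring

lemma diag_inv (d : Fin 6 → ℝ) (hd : ∀ i, d i ≠ 0) :
    (Matrix.diagonal d)⁻¹ = Matrix.diagonal (fun i => (d i)⁻¹) := by
  apply Matrix.inv_eq_right_inv
  rw [Matrix.diagonal_mul_diagonal]
  have h : (fun i => d i * (d i)⁻¹) = fun _ => (1:ℝ) := funext fun i => mul_inv_cancel₀ (hd i)
  rw [h, Matrix.diagonal_one]

/-- equation (28) of the paper: after applying the
piecewise-constant adaptation law, the prediction error at the end of a sampling
interval is expressed purely through mean-value points of the forcing terms. -/
theorem prediction_error_mean_value_form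
    (lam : Fin 6 → ℝ) (hlam : ∀ i, lam i < 0)
    (a b : ℝ) (hab : a < b)
    (Bbar : ℝ → Matrix (Fin 6) (Fin 6) ℝ) (σ : ℝ → Fin 6 → ℝ)
    (hBcont : ContinuousOn Bbar (Set.Icc a b))
    (hσcont : ContinuousOn σ (Set.Icc a b))
    (hBa : IsUnit (Bbar a))
    (T : ℝ) (hT : T = b - a)
    (A : Matrix (Fin 6) (Fin 6) ℝ) (hA : A = Matrix.diagonal lam)
    (Φ : Matrix (Fin 6) (Fin 6) ℝ)
    (hΦ : Φ = A⁻¹ * (NormedSpace.exp (T • A) - 1))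
    (ztil : ℝ → Fin 6 → ℝ)
    (σhat0 : Fin 6 → ℝ)
    (hσhat0 : σhat0
      = -(((Bbar a)⁻¹ * Φ⁻¹).mulVec ((NormedSpace.exp (T • A)).mulVec (ztil a))))
    (hz : ∀ t ∈ Set.Icc a b,
      HasDerivAt ztil (A.mulVec (ztil t) + (Bbar t).mulVec (σhat0 - σ t)) t) :
    ∃ τ : Fin 6 → ℝ, ∃ β : Fin 6 → ℝ,
      (∀ i, τ i ∈ Set.Icc a b) ∧ (∀ i, β i ∈ Set.Icc a b) ∧
      ∀ i, ztil b i
        = (1 - Real.exp (lam i * T)) / lam i *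
            (((Bbar (τ i)).mulVec (σ (τ i))) i
              - ((Bbar (β i) - Bbar a).mulVec σhat0) i) := by
  subst hT hA
  set E : Fin 6 → ℝ := fun i => Real.exp ((b - a) * lam i) with hE
  have hTpos : 0 < b - a := sub_pos.2 hab
  have hlamne : ∀ i, lam i ≠ 0 := fun i => (hlam i).ne
  have hEne : ∀ i, E i - 1 ≠ 0 := by
    intro i
    have : E i < 1 := Real.exp_lt_one_iff.mpr (mul_neg_of_pos_of_neg hTpos (hlam i))
    linarith
  have hexp : NormedSpace.exp ((b - a) • Matrix.diagonal lam) = Matrix.diagonal E :=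
    exp_smul_diag _ _
  -- compute Φ and its inverse
  have hΦd : Φ = Matrix.diagonal (fun i => (lam i)⁻¹ * (E i - 1)) := by
    rw [hΦ, hexp, diag_inv lam hlamne, ← Matrix.diagonal_one,
      Matrix.diagonal_sub, Matrix.diagonal_mul_diagonal]
  have hΦinv : Φ⁻¹ = Matrix.diagonal (fun i => ((lam i)⁻¹ * (E i - 1))⁻¹) := by
    rw [hΦd, diag_inv _ (fun i => mul_ne_zero (inv_ne_zero (hlamne i)) (hEne i))]
  -- compute (Bbar a) *ᵥ σhat0
  have hc0 : ∀ i, ((Bbar a).mulVec σhat0) i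
      = -(((lam i)⁻¹ * (E i - 1))⁻¹ * (E i * ztil a i)) := by
    intro i
    have h1 : (Bbar a).mulVec σhat0
        = -((Bbar a * ((Bbar a)⁻¹ * Φ⁻¹)).mulVec
            ((NormedSpace.exp ((b - a) • Matrix.diagonal lam)).mulVec (ztil a))) := by
      rw [hσhat0, Matrix.mulVec_neg, Matrix.mulVec_mulVec]
    have h2 : Bbar a * ((Bbar a)⁻¹ * Φ⁻¹) = Φ⁻¹ := by
      rw [← mul_assoc, Matrix.mul_nonsing_inv _ ((Matrix.isUnit_iff_isUnit_det _).1 hBa),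
        one_mul]
    rw [h1, h2, hΦinv, hexp]
    simp [Matrix.mulVec_diagonal]
    ring
  -- main per-component argument
  have main : ∀ i : Fin 6, ∃ τi ∈ Set.Icc a b, ∃ βi ∈ Set.Icc a b,
      ztil b i = (1 - Real.exp (lam i * (b - a))) / lam i *
        (((Bbar τi).mulVec (σ τi)) i - ((Bbar βi - Bbar a).mulVec σhat0) i) := by
    intro i
    set L : ℝ := lam i with hL
    have hBentry : ∀ j, ContinuousOn (fun t => Bbar t i j) (Set.Icc a b) := fun j => by
      exact ((continuous_apply j).comp (continuous_apply i)).comp_continuousOn hBcont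
    have hσentry : ∀ j, ContinuousOn (fun t => σ t j) (Set.Icc a b) := fun j =>
      (continuous_apply j).comp_continuousOn hσcont
    have hh2 : ContinuousOn (fun t => ((Bbar t).mulVec (σ t)) i) (Set.Icc a b) := by
      simp only [Matrix.mulVec, dotProduct]
      exact continuousOn_finset_sum _ (fun j _ => (hBentry j).mul (hσentry j))
    have hhB : ContinuousOn (fun t => ((Bbar t).mulVec σhat0) i) (Set.Icc a b) := by
      simp only [Matrix.mulVec, dotProduct]
      exact continuousOn_finset_sum _ (fun j _ => (hBentry j).mul continuousOn_const)
    have hh1 : ContinuousOn (fun t => ((Bbar t - Bbar a).mulVec σhat0) i) (Set.Icc a b) := by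
      simp only [Matrix.sub_mulVec, Pi.sub_apply]
      exact hhB.sub continuousOn_const
    have hf : ContinuousOn (fun t => ((Bbar t).mulVec (σhat0 - σ t)) i) (Set.Icc a b) := by
      simp only [Matrix.mulVec_sub, Pi.sub_apply]
      exact hhB.sub hh2
    -- componentwise ODE
    have hui : ∀ t ∈ Set.Icc a b, HasDerivAt (fun t => ztil t i)
        (L * ztil t i + ((Bbar t).mulVec (σhat0 - σ t)) i) t := by
      intro t ht
      have := (hasDerivAt_pi.mp (hz t ht)) i
      simpa [Matrix.mulVec_diagonal, hL] using this
    have hsol : ztil b i = Real.exp (L * (b - a)) * ztil a i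
        + ∫ s in a..b, Real.exp (L * (b - s)) * ((Bbar s).mulVec (σhat0 - σ s)) i :=
      linear_ode_sol a b L hab.le (fun t => ztil t i)
      (fun t => ((Bbar t).mulVec (σhat0 - σ t)) i) hf hui
    -- weight
    set w : ℝ → ℝ := fun s => Real.exp (L * (b - s)) with hw
    have hwc : ContinuousOn w (Set.Icc a b) :=
      (Real.continuous_exp.comp (continuous_const.mul
        (continuous_const.sub continuous_id))).continuousOn
    have hwpos : ∀ s ∈ Set.Icc a b, 0 < w s := fun s _ => Real.exp_pos _
    have hW : (∫ s in a..b, w s) = (E i - 1) / L := by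
      rw [hw]
      rw [exp_weight_integral a b L (hlamne i)]
      congr 1
      rw [hE, hL]
      ring_nf
    -- mean value points
    obtain ⟨τi, hτi, hτeq⟩ := weighted_mvt a b hab w _ hwc hwpos hh2
    obtain ⟨βi, hβi, hβeq⟩ := weighted_mvt a b hab w _ hwc hwpos hh1
    -- integrability for splitting
    have huIcc : Set.uIcc a b = Set.Icc a b := Set.uIcc_of_le hab.le
    have hi1 : IntervalIntegrable (fun s => w s * ((Bbar s - Bbar a).mulVec σhat0) i)
        MeasureTheory.volume a b :=
      ContinuousOn.intervalIntegrable (by rw [huIcc]; exact hwc.mul hh1)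
    have hi2 : IntervalIntegrable (fun s => w s * ((Bbar s).mulVec (σ s)) i)
        MeasureTheory.volume a b :=
      ContinuousOn.intervalIntegrable (by rw [huIcc]; exact hwc.mul hh2)
    have hic : IntervalIntegrable (fun s => w s * ((Bbar a).mulVec σhat0) i)
        MeasureTheory.volume a b :=
      ContinuousOn.intervalIntegrable (by rw [huIcc]; exact hwc.mul continuousOn_const)
    have hsplit : (∫ s in a..b, w s * ((Bbar s).mulVec (σhat0 - σ s)) i)
        = (∫ s in a..b, w s * ((Bbar s - Bbar a).mulVec σhat0) i)
          + ((Bbar a).mulVec σhat0) i * (∫ s in a..b, w s)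
          - (∫ s in a..b, w s * ((Bbar s).mulVec (σ s)) i) := by
      rw [← intervalIntegral.integral_const_mul]
      rw [← intervalIntegral.integral_add hi1 (by simpa [mul_comm] using hic)]
      rw [← intervalIntegral.integral_sub (hi1.add (by simpa [mul_comm] using hic)) hi2]
      apply intervalIntegral.integral_congr
      intro s _
      show w s * ((Bbar s).mulVec (σhat0 - σ s)) i
        = (w s * ((Bbar s - Bbar a).mulVec σhat0) i + ((Bbar a).mulVec σhat0) i * w s)
          - w s * ((Bbar s).mulVec (σ s)) i
      have e1 : ((Bbar s).mulVec (σhat0 - σ s)) i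
          = ((Bbar s).mulVec σhat0) i - ((Bbar s).mulVec (σ s)) i := by
        rw [Matrix.mulVec_sub]; rfl
      have e2 : ((Bbar s - Bbar a).mulVec σhat0) i
          = ((Bbar s).mulVec σhat0) i - ((Bbar a).mulVec σhat0) i := by
        rw [Matrix.sub_mulVec]; rfl
      rw [e1, e2]; ring
    refine ⟨τi, hτi, βi, hβi, ?_⟩
    rw [hsol, hsplit, hτeq, hβeq, hW, hc0 i]
    have hEi : Real.exp (L * (b - a)) = E i := by rw [hE, hL]; ring_nf
    have hEi2 : Real.exp (lam i * (b - a)) = E i := by rw [hE]; ring_nf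
    rw [hEi]
    simp only [hL]
    have h1 : E i - 1 ≠ 0 := hEne i
    have h2 : lam i ≠ 0 := hlamne i
    field_simp
    ring
  choose τ hτ β hβ heq using main
  exact ⟨τ, β, hτ, hβ, heq⟩
end

section
/- Let Q ∈ SO(3), and set Ψ(Q) = trace(I − Q)/2 and e(Q) ∈ ℝ³ the vector with components e(Q)₁ = (Q₃₂ − Q₂₃)/2, e(Q)₂ = (Q₁₃ − Q₃₁)/2, e(Q)₃ = (Q₂₁ − Q₁₂)/2. Then (1/2)‖e(Q)‖² ≤ Ψ(Q); moreover, if ψ₁ is a real number with Ψ(Q) ≤ ψ₁ < 2, then Ψ(Q) ≤ ‖e(Q)‖²/(2 − ψ₁). -/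
open scoped Matrix

/-- for `Q ∈ SO(3)`, `(1/2)‖e(Q)‖² ≤ Ψ(Q)`; moreover, if
`Ψ(Q) ≤ ψ₁ < 2` then `Ψ(Q) ≤ ‖e(Q)‖²/(2 − ψ₁)`. Here `Ψ(Q) = trace(I − Q)/2`
and `e(Q) = ((Q − Qᵀ)^∨)/2`, with the Euclidean norm on ℝ³. -/
theorem rotation_error_sandwich (Q : Matrix (Fin 3) (Fin 3) ℝ)
    (hQ : Qᵀ * Q = 1) (hdet : Q.det = 1) :
    (1 / 2) * ‖(WithLp.equiv 2 (Fin 3 → ℝ)).symm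
        ![(Q 2 1 - Q 1 2) / 2, (Q 0 2 - Q 2 0) / 2, (Q 1 0 - Q 0 1) / 2]‖ ^ 2
      ≤ Matrix.trace (1 - Q) / 2
    ∧ ∀ ψ₁ : ℝ, Matrix.trace (1 - Q) / 2 ≤ ψ₁ → ψ₁ < 2 →
        Matrix.trace (1 - Q) / 2
          ≤ ‖(WithLp.equiv 2 (Fin 3 → ℝ)).symm
              ![(Q 2 1 - Q 1 2) / 2, (Q 0 2 - Q 2 0) / 2, (Q 1 0 - Q 0 1) / 2]‖ ^ 2
            / (2 - ψ₁) := by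
  have hQQ' : Q * Qᵀ = 1 := mul_eq_one_comm.mp hQ
  have hadj : Q.adjugate = Qᵀ := by
    calc Q.adjugate = Q.adjugate * (Q * Qᵀ) := by rw [hQQ', Matrix.mul_one]
    _ = (Q.adjugate * Q) * Qᵀ := by rw [Matrix.mul_assoc]
    _ = Qᵀ := by rw [Matrix.adjugate_mul, hdet, one_smul, Matrix.one_mul]
  -- scalar orthogonality equations (rows of Q orthonormal)
  have hrow : ∀ i j, Q i 0 * Q j 0 + Q i 1 * Q j 1 + Q i 2 * Q j 2 = (1 : Matrix (Fin 3) (Fin 3) ℝ) i j := by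
    intro i j
    have := (Matrix.ext_iff.2 hQQ') i j
    simpa [Matrix.mul_apply, Fin.sum_univ_three, Matrix.transpose_apply] using this
  have h00 := hrow 0 0; have h11 := hrow 1 1; have h22 := hrow 2 2
  simp [Matrix.one_apply] at h00 h11 h22
  -- cofactor equations from adjugate = transpose (diagonal entries)
  have hc : ∀ i, Q.adjugate i i = Q i i := by
    intro i
    have := (Matrix.ext_iff.2 hadj) i i
    simpa [Matrix.transpose_apply] using this
  have hc0 := hc 0; have hc1 := hc 1; have hc2 := hc 2
  simp [Matrix.adjugate_fin_three] at hc0 hc1 hc2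
  -- norm squared
  set e := (WithLp.equiv 2 (Fin 3 → ℝ)).symm
      ![(Q 2 1 - Q 1 2) / 2, (Q 0 2 - Q 2 0) / 2, (Q 1 0 - Q 0 1) / 2] with he
  clear_value e
  have hnorm : ‖e‖ ^ 2 = ((Q 2 1 - Q 1 2) / 2) ^ 2 + ((Q 0 2 - Q 2 0) / 2) ^ 2
      + ((Q 1 0 - Q 0 1) / 2) ^ 2 := by
    rw [EuclideanSpace.norm_eq, Real.sq_sqrt (by positivity)]
    simp [he, Fin.sum_univ_three, sq_abs]
  have htr : Matrix.trace (1 - Q) / 2 = (3 - (Q 0 0 + Q 1 1 + Q 2 2)) / 2 := by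
    simp [Matrix.trace, Matrix.sub_apply, Matrix.one_apply, Fin.sum_univ_three]
  set ψ : ℝ := Matrix.trace (1 - Q) / 2 with hψ
  clear_value ψ
  have key : ‖e‖ ^ 2 = ψ * (2 - ψ) := by
    rw [hnorm, htr]
    nlinarith [h00, h11, h22, hc0, hc1, hc2, sq_nonneg (Q 0 0), sq_nonneg (Q 1 1)]
  have hnn : (0:ℝ) ≤ ψ * (2 - ψ) := key ▸ sq_nonneg ‖e‖
  clear hnorm he hψ htr hQ hdet hQQ' hadj hrow hc h00 h11 h22 hc0 hc1 hc2
  constructor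
  · rw [key]; nlinarith [sq_nonneg ψ]
  · intro ψ₁ hle hlt
    have h2 : 0 < 2 - ψ₁ := by linarith
    rw [le_div_iff₀ h2, key]
    have hψnn : 0 ≤ ψ := by nlinarith
    nlinarith
end

section
/- Let Q ∈ SO(3) and let ψ₁ be a real number with 0 ≤ ψ₁ ≤ 1. If Ψ(Q) = trace(I − Q)/2 satisfies Ψ(Q) ≤ ψ₁, then the attitude error vector e(Q), with components e(Q)₁ = (Q₃₂ − Q₂₃)/2, e(Q)₂ = (Q₁₃ − Q₃₁)/2, e(Q)₃ = (Q₂₁ − Q₁₂)/2, satisfies ‖e(Q)‖ ≤ √(ψ₁(2 − ψ₁)). -/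
open scoped Matrix

set_option maxHeartbeats 1000000 in
/-- for `Q ∈ SO(3)` and `0 ≤ ψ₁ ≤ 1`, if `Ψ(Q) = trace(I − Q)/2 ≤ ψ₁`
then the attitude error vector `e(Q) = ((Q − Qᵀ)^∨)/2` satisfies
`‖e(Q)‖ ≤ √(ψ₁(2 − ψ₁))` (Euclidean norm on ℝ³). -/
theorem attitude_error_norm_le (Q : Matrix (Fin 3) (Fin 3) ℝ)
    (hQ : Qᵀ * Q = 1) (hdet : Q.det = 1)
    (ψ₁ : ℝ) (hψ₁0 : 0 ≤ ψ₁) (hψ₁1 : ψ₁ ≤ 1)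
    (hΨ : Matrix.trace (1 - Q) / 2 ≤ ψ₁) :
    ‖(WithLp.equiv 2 (Fin 3 → ℝ)).symm
        ![(Q 2 1 - Q 1 2) / 2, (Q 0 2 - Q 2 0) / 2, (Q 1 0 - Q 0 1) / 2]‖
      ≤ Real.sqrt (ψ₁ * (2 - ψ₁)) := by
  -- Q * Qᵀ = 1 as well
  have hQ' : Q * Qᵀ = 1 := mul_eq_one_comm.mp hQ
  -- adjugate Q = Qᵀ
  have hadj : Q.adjugate = Qᵀ := by
    have h1 : Q * Q.adjugate = 1 := by
      rw [Matrix.mul_adjugate, hdet, one_smul]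
    calc Q.adjugate = (Qᵀ * Q) * Q.adjugate := by rw [hQ, one_mul]
      _ = Qᵀ * (Q * Q.adjugate) := by rw [Matrix.mul_assoc]
      _ = Qᵀ := by rw [h1, mul_one]
  have hadj3 := Matrix.adjugate_fin_three Q
  -- cofactor identities for diagonal entries
  have c0 : Q 1 1 * Q 2 2 - Q 1 2 * Q 2 1 = Q 0 0 := by
    have := congrFun (congrFun (hadj3.symm.trans hadj) 0) 0
    simpa [Matrix.transpose_apply] using this
  have c1 : Q 0 0 * Q 2 2 - Q 0 2 * Q 2 0 = Q 1 1 := by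
    have := congrFun (congrFun (hadj3.symm.trans hadj) 1) 1
    simpa [Matrix.transpose_apply] using this
  have c2 : Q 0 0 * Q 1 1 - Q 0 1 * Q 1 0 = Q 2 2 := by
    have := congrFun (congrFun (hadj3.symm.trans hadj) 2) 2
    simpa [Matrix.transpose_apply] using this
  -- orthonormality of columns: (Qᵀ * Q) j j = 1
  have o0 : Q 0 0 * Q 0 0 + Q 1 0 * Q 1 0 + Q 2 0 * Q 2 0 = 1 := by
    have := congrFun (congrFun hQ 0) 0
    simpa [Matrix.mul_apply, Fin.sum_univ_three, Matrix.transpose_apply,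
      Matrix.one_apply] using this
  have o1 : Q 0 1 * Q 0 1 + Q 1 1 * Q 1 1 + Q 2 1 * Q 2 1 = 1 := by
    have := congrFun (congrFun hQ 1) 1
    simpa [Matrix.mul_apply, Fin.sum_univ_three, Matrix.transpose_apply,
      Matrix.one_apply] using this
  have o2 : Q 0 2 * Q 0 2 + Q 1 2 * Q 1 2 + Q 2 2 * Q 2 2 = 1 := by
    have := congrFun (congrFun hQ 2) 2
    simpa [Matrix.mul_apply, Fin.sum_univ_three, Matrix.transpose_apply,
      Matrix.one_apply] using this
  -- trace bound
  have htr : (3 - (Q 0 0 + Q 1 1 + Q 2 2)) / 2 ≤ ψ₁ := by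
    have : Matrix.trace (1 - Q) = 3 - (Q 0 0 + Q 1 1 + Q 2 2) := by
      rw [Matrix.trace_sub, Matrix.trace_one, Matrix.trace_fin_three]
      norm_num
    linarith [hΨ, this ▸ hΨ]
  -- diagonal entries are at most 1
  have hd0 : Q 0 0 ≤ 1 := by nlinarith [sq_nonneg (Q 1 0), sq_nonneg (Q 2 0), sq_nonneg (Q 0 0 - 1)]
  have hd1 : Q 1 1 ≤ 1 := by nlinarith [sq_nonneg (Q 0 1), sq_nonneg (Q 2 1), sq_nonneg (Q 1 1 - 1)]
  have hd2 : Q 2 2 ≤ 1 := by nlinarith [sq_nonneg (Q 0 2), sq_nonneg (Q 1 2), sq_nonneg (Q 2 2 - 1)]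
  -- reduce the norm to a sqrt of a sum of squares
  rw [EuclideanSpace.norm_eq]
  apply Real.sqrt_le_sqrt
  have hsum : ∑ i : Fin 3, ‖((WithLp.equiv 2 (Fin 3 → ℝ)).symm
        ![(Q 2 1 - Q 1 2) / 2, (Q 0 2 - Q 2 0) / 2, (Q 1 0 - Q 0 1) / 2]) i‖ ^ 2
      = ((Q 2 1 - Q 1 2) / 2) ^ 2 + ((Q 0 2 - Q 2 0) / 2) ^ 2 + ((Q 1 0 - Q 0 1) / 2) ^ 2 := by
    simp [Fin.sum_univ_three, Real.norm_eq_abs, sq_abs]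
  rw [hsum]
  -- key algebraic identity + monotonicity
  set t := Q 0 0 + Q 1 1 + Q 2 2 with ht
  have key : ((Q 2 1 - Q 1 2) / 2) ^ 2 + ((Q 0 2 - Q 2 0) / 2) ^ 2 + ((Q 1 0 - Q 0 1) / 2) ^ 2
      = (3 + 2 * t - t ^ 2) / 4 := by
    have hsq : Q 0 0 * Q 0 0 + Q 1 0 * Q 1 0 + Q 2 0 * Q 2 0
        + (Q 0 1 * Q 0 1 + Q 1 1 * Q 1 1 + Q 2 1 * Q 2 1)
        + (Q 0 2 * Q 0 2 + Q 1 2 * Q 1 2 + Q 2 2 * Q 2 2) = 3 := by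
      rw [o0, o1, o2]; norm_num
    linear_combination (1/4) * hsq + (1/2) * c0 + (1/2) * c1 + (1/2) * c2
  rw [key]
  nlinarith [mul_nonneg (by linarith : (0:ℝ) ≤ ψ₁ - (3 - t) / 2)
    (by linarith : (0:ℝ) ≤ 2 - ψ₁ - (3 - t) / 2)]
end

section
/- For every rotation matrix Q ∈ SO(3) and every vector v ∈ ℝ³, the inequality ‖trace(Q)·v − Q v‖ ≤ 2‖v‖ holds; equivalently, the operator norm of the matrix C(Q) = (trace(Q)·I − Q)/2 is at most 1. -/
open scoped Matrix

private lemma adj3_aux (A : Matrix (Fin 3) (Fin 3) ℝ) :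
    A.adjugate = A*A - A.trace • A + ((A.trace^2 - (A*A).trace)/2) • 1 := by
  rw [Matrix.adjugate_fin_three]
  ext i j
  fin_cases i <;> fin_cases j <;>
    simp [Matrix.mul_apply, Fin.sum_univ_three, Matrix.trace_fin_three, Matrix.one_apply] <;> ring

private lemma dot_self_nonneg_aux (w : Fin 3 → ℝ) : 0 ≤ w ⬝ᵥ w :=
  Finset.sum_nonneg fun i _ => mul_self_nonneg (w i)

private lemma final_aux (t x N a b : ℝ) (hxN : x ≤ N) (hN0 : 0 ≤ N)
    (hcrux : 2*x - (t-1)*N ≥ 0) (ht1 : -1 ≤ t) (ht3 : t ≤ 3)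
    (ha : a^2 = t^2*N - 2*t*x + N) (hb : b^2 = N) (ha0 : 0 ≤ a) (hb0 : 0 ≤ b) :
    a ≤ 2*b := by
  have key : 2*t*x ≥ (t^2-3)*N := by
    rcases le_or_gt 0 t with h | h
    · nlinarith
    · nlinarith
  nlinarith [sq_nonneg (a - 2*b)]

private lemma norm_sq_dot_aux (u : Fin 3 → ℝ) :
    ‖(WithLp.equiv 2 (Fin 3 → ℝ)).symm u‖^2 = u ⬝ᵥ u := by
  rw [EuclideanSpace.norm_sq_eq]
  simp [dotProduct, Real.norm_eq_abs, sq_abs, sq]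

/-- for every rotation matrix `Q ∈ SO(3)` and every `v ∈ ℝ³`,
`‖trace(Q)·v − Q v‖ ≤ 2‖v‖` (Euclidean norm on ℝ³); i.e. the operator norm of
`C(Q) = (trace(Q)·I − Q)/2` is at most 1. -/
theorem trace_smul_sub_mulVec_norm_le (Q : Matrix (Fin 3) (Fin 3) ℝ)
    (hQ : Qᵀ * Q = 1) (hdet : Q.det = 1) (v : Fin 3 → ℝ) :
    ‖(WithLp.equiv 2 (Fin 3 → ℝ)).symm (Matrix.trace Q • v - Q.mulVec v)‖
      ≤ 2 * ‖(WithLp.equiv 2 (Fin 3 → ℝ)).symm v‖ := by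
  set t := Q.trace with ht
  have hQQt : Q * Qᵀ = 1 := mul_eq_one_comm.mpr hQ
  have hadjQ : Q.adjugate * Q = 1 := by rw [Matrix.adjugate_mul, hdet, one_smul]
  have hadj : Q.adjugate = Qᵀ := by
    calc Q.adjugate = Q.adjugate * (Q * Qᵀ) := by rw [hQQt, mul_one]
    _ = (Q.adjugate * Q) * Qᵀ := by rw [mul_assoc]
    _ = Qᵀ := by rw [hadjQ, one_mul]
  have hCH0 : Qᵀ = Q*Q - t • Q + ((t^2 - (Q*Q).trace)/2) • 1 := by
    rw [← hadj, adj3_aux]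
  have htr : t = (Q*Q).trace - t*t + ((t^2 - (Q*Q).trace)/2) * 3 := by
    have := congrArg Matrix.trace hCH0
    simpa [Matrix.trace_transpose, Matrix.trace_smul, Matrix.trace_one, smul_eq_mul] using this
  have hc2 : (Q*Q).trace = t^2 - 2*t := by nlinarith [htr]
  have hCH : Qᵀ = Q*Q - t • Q + t • 1 := by
    rw [hCH0, hc2]; ring_nf
  -- trace bounds
  have h0 := congrFun (congrFun hQ 0) 0
  have h1 := congrFun (congrFun hQ 1) 1
  have h2 := congrFun (congrFun hQ 2) 2
  simp [Matrix.mul_apply, Fin.sum_univ_three, Matrix.transpose_apply, Matrix.one_apply] at h0 h1 h2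
  have hle : (Q*Q).trace ≤ 3 := by
    rw [Matrix.trace_fin_three]
    simp only [Matrix.mul_apply, Fin.sum_univ_three]
    nlinarith [sq_nonneg (Q 0 1 - Q 1 0), sq_nonneg (Q 0 2 - Q 2 0), sq_nonneg (Q 1 2 - Q 2 1)]
  rw [hc2] at hle
  have ht1 : -1 ≤ t := by nlinarith
  have ht3 : t ≤ 3 := by nlinarith
  -- the matrix M
  have hQ3 : Q*Q*Q = t • (Q*Q) - t • Q + 1 := by
    have h1' : Q * Qᵀ = Q*Q*Q - t • (Q*Q) + t • Q := by
      rw [hCH, mul_add, mul_sub, mul_smul_comm, mul_smul_comm, mul_one, mul_assoc]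
    have h2' := hQQt.symm.trans h1'
    have h3' : Q*Q*Q = (1 : Matrix (Fin 3) (Fin 3) ℝ) + t • (Q*Q) - t • Q := by
      rw [h2']; abel
    rw [h3']; abel
  set M : Matrix (Fin 3) (Fin 3) ℝ := Q*Q + (1-t) • Q + 1 with hM
  have hM2 : M = Q + Qᵀ - (t-1) • 1 := by
    rw [hCH, hM]; module
  have hMQ : M * Q = M := by
    rw [hM, add_mul, add_mul, smul_mul_assoc, one_mul, hQ3]
    module
  have hMM : M * M = (3-t) • M := by
    calc M * M = M*(Q*Q) + (1-t) • (M*Q) + M := by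
          conv_lhs => rw [hM]
          rw [mul_add, mul_add, mul_smul_comm, mul_one]
      _ = (3-t) • M := by rw [← mul_assoc, hMQ, hMQ]; module
  have hMsym : Mᵀ = M := by
    rw [hM2]
    simp [Matrix.transpose_add, Matrix.transpose_sub, Matrix.transpose_smul]
    abel
  -- quadratic forms
  set x : ℝ := v ⬝ᵥ (Q *ᵥ v) with hx
  set N : ℝ := v ⬝ᵥ v with hN
  have hN0 : 0 ≤ N := dot_self_nonneg_aux v
  have hTrick : ∀ (A : Matrix (Fin 3) (Fin 3) ℝ) (w : Fin 3 → ℝ),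
      v ⬝ᵥ (Aᵀ *ᵥ w) = (A *ᵥ v) ⬝ᵥ w := by
    intro A w
    rw [Matrix.dotProduct_mulVec, Matrix.vecMul_transpose]
  have hNv : (Q *ᵥ v) ⬝ᵥ (Q *ᵥ v) = N := by
    rw [← hTrick Q (Q *ᵥ v), Matrix.mulVec_mulVec, hQ, Matrix.one_mulVec]
  have hQTform : v ⬝ᵥ (Qᵀ *ᵥ v) = x := by
    rw [hTrick Q v, dotProduct_comm]
  have hMform : v ⬝ᵥ (M *ᵥ v) = 2*x - (t-1)*N := by
    rw [hM2, Matrix.sub_mulVec, Matrix.add_mulVec, Matrix.smul_mulVec,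
      Matrix.one_mulVec, dotProduct_sub, dotProduct_add,
      dotProduct_smul, hQTform]
    push_cast [smul_eq_mul]
    ring
  have hkey : (M *ᵥ v) ⬝ᵥ (M *ᵥ v) = (3-t) * (v ⬝ᵥ (M *ᵥ v)) := by
    rw [← hTrick M (M *ᵥ v), hMsym, Matrix.mulVec_mulVec, hMM,
      Matrix.smul_mulVec, dotProduct_smul, smul_eq_mul]
  have hMpos : 0 ≤ v ⬝ᵥ (M *ᵥ v) := by
    rcases eq_or_lt_of_le ht3 with h3 | h3
    · have hz : (M *ᵥ v) ⬝ᵥ (M *ᵥ v) = 0 := by rw [hkey, ← h3]; ring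
      have hzero : M *ᵥ v = 0 := dotProduct_self_eq_zero.mp hz
      rw [hzero, dotProduct_zero]
    · have h := dot_self_nonneg_aux (M *ᵥ v)
      rw [hkey] at h
      nlinarith
  have hcrux : 2*x - (t-1)*N ≥ 0 := by rw [← hMform]; exact hMpos
  have hxN : x ≤ N := by
    have h := dot_self_nonneg_aux (v - Q *ᵥ v)
    rw [dotProduct_sub, sub_dotProduct, sub_dotProduct,
      hNv, dotProduct_comm (Q *ᵥ v) v] at h
    simp only [← hx, ← hN] at h
    linarith
  -- final assembly
  set a : ℝ := ‖(WithLp.equiv 2 (Fin 3 → ℝ)).symm (t • v - Q.mulVec v)‖ with hadef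
  set b : ℝ := ‖(WithLp.equiv 2 (Fin 3 → ℝ)).symm v‖ with hbdef
  have ha : a^2 = t^2*N - 2*t*x + N := by
    rw [hadef, norm_sq_dot_aux]
    show (t • v - Q *ᵥ v) ⬝ᵥ (t • v - Q *ᵥ v) = _
    rw [dotProduct_sub, sub_dotProduct, sub_dotProduct]
    simp only [smul_dotProduct, dotProduct_smul, smul_eq_mul]
    rw [hNv, dotProduct_comm (Q *ᵥ v) v]
    simp only [← hx, ← hN]
    ring
  have hb : b^2 = N := norm_sq_dot_aux v
  have ha0 : 0 ≤ a := norm_nonneg _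
  have hb0 : 0 ≤ b := norm_nonneg _
  show a ≤ 2 * b
  exact final_aux t x N a b hxN hN0 hcrux ht1 ht3 ha hb ha0 hb0
end

section
/- Let K_p, m, K_R > 0 and c₁, c₂ ≥ 0 be real constants, let e_p, e_v, e_Ω ∈ ℝ³, let J be a real 3×3 matrix and λ_m, λ_M real numbers such that λ_m‖w‖² ≤ ⟨w, J w⟩ ≤ λ_M‖w‖² for all w ∈ ℝ³, let R, R_d ∈ SO(3), set Q = R_dᵀ R, Ψ = trace(I − Q)/2, and let e_R ∈ ℝ³ be the vector with components (Q₃₂ − Q₂₃)/2, (Q₁₃ − Q₃₁)/2, (Q₂₁ − Q₁₂)/2. Suppose ψ₁ is a real number with Ψ ≤ ψ₁ < 1. Define V = (1/2)K_p‖e_p‖² + (1/2)m‖e_v‖² + c₁⟨e_p, e_v⟩ + (1/2)⟨e_Ω, J e_Ω⟩ + K_R Ψ + c₂⟨e_R, e_Ω⟩. Then (1/2)(K_p‖e_p‖² − 2c₁‖e_p‖‖e_v‖ + m‖e_v‖²) + (1/2)(K_R‖e_R‖² − 2c₂‖e_R‖‖e_Ω‖ + λ_m‖e_Ω‖²) ≤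 V ≤ (1/2)(K_p‖e_p‖² + 2c₁‖e_p‖‖e_v‖ + m‖e_v‖²) + (1/2)((2K_R/(2−ψ₁))‖e_R‖² + 2c₂‖e_R‖‖e_Ω‖ + λ_M‖e_Ω‖²). -/
open scoped Matrix RealInnerProductSpace

lemma so3_key (Q : Matrix (Fin 3) (Fin 3) ℝ) (h1 : Qᵀ * Q = 1) (hdet : Q.det = 1) :
    (Q 2 1 - Q 1 2)^2 + (Q 0 2 - Q 2 0)^2 + (Q 1 0 - Q 0 1)^2
      = (3 - Q.trace) * (1 + Q.trace) ∧ Q.trace ≤ 3 := by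
  have hQQ : Q * Qᵀ = 1 := mul_eq_one_comm.mp h1
  have hadj : Q.adjugate = Qᵀ := by
    calc Q.adjugate = (Qᵀ * Q) * Q.adjugate := by rw [h1, Matrix.one_mul]
      _ = Qᵀ * (Q * Q.adjugate) := by rw [Matrix.mul_assoc]
      _ = Qᵀ := by rw [Matrix.mul_adjugate, hdet, one_smul, Matrix.mul_one]
  rw [Matrix.adjugate_fin_three] at hadj
  have h00 := congrFun (congrFun hadj 0) 0
  have h11 := congrFun (congrFun hadj 1) 1
  have h22 := congrFun (congrFun hadj 2) 2
  simp [Matrix.transpose_apply] at h00 h11 h22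
  have r0 := congrFun (congrFun hQQ 0) 0
  have r1 := congrFun (congrFun hQQ 1) 1
  have r2 := congrFun (congrFun hQQ 2) 2
  simp [Matrix.mul_apply, Fin.sum_univ_three, Matrix.one_apply] at r0 r1 r2
  rw [Matrix.trace_fin_three]
  constructor
  · linear_combination r0 + r1 + r2 + 2*h00 + 2*h11 + 2*h22
  · nlinarith [sq_nonneg (Q 0 1), sq_nonneg (Q 0 2), sq_nonneg (Q 1 0), sq_nonneg (Q 1 2),
      sq_nonneg (Q 2 0), sq_nonneg (Q 2 1), sq_nonneg (Q 0 0 - 1), sq_nonneg (Q 1 1 - 1),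
      sq_nonneg (Q 2 2 - 1)]

lemma euclid_norm_sq (x : EuclideanSpace ℝ (Fin 3)) :
    ‖x‖^2 = x 0^2 + x 1^2 + x 2^2 := by
  rw [← real_inner_self_eq_norm_sq, real_inner_comm]
  rw [EuclideanSpace.inner_eq_star_dotProduct]
  simp [dotProduct, Fin.sum_univ_three]
  ring

/-- equation (63) of the paper: the geometric-control Lyapunov
function `V` is sandwiched between the quadratic forms
`z₁ᵀM₁₁z₁ + z₂ᵀM₂₁z₂` and `z₁ᵀM₁₂z₁ + z₂ᵀM₂₂z₂`. -/
theorem lyapunov_sandwich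
    (Kp m KR c₁ c₂ : ℝ) (hKp : 0 < Kp) (hm : 0 < m) (hKR : 0 < KR)
    (hc₁ : 0 ≤ c₁) (hc₂ : 0 ≤ c₂)
    (ep ev eΩ : EuclideanSpace ℝ (Fin 3))
    (J : Matrix (Fin 3) (Fin 3) ℝ) (lm lM : ℝ)
    (hJ : ∀ w : EuclideanSpace ℝ (Fin 3),
      lm * ‖w‖ ^ 2 ≤ ⟪w, Matrix.toEuclideanLin J w⟫ ∧
      ⟪w, Matrix.toEuclideanLin J w⟫ ≤ lM * ‖w‖ ^ 2)
    (R Rd : Matrix (Fin 3) (Fin 3) ℝ)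
    (hR : Rᵀ * R = 1) (hRdet : R.det = 1)
    (hRd : Rdᵀ * Rd = 1) (hRddet : Rd.det = 1)
    (Q : Matrix (Fin 3) (Fin 3) ℝ) (hQ : Q = Rdᵀ * R)
    (Ψ : ℝ) (hΨ : Ψ = Matrix.trace (1 - Q) / 2)
    (eR : EuclideanSpace ℝ (Fin 3))
    (heR : eR = (WithLp.equiv 2 (Fin 3 → ℝ)).symm
      ![(Q 2 1 - Q 1 2) / 2, (Q 0 2 - Q 2 0) / 2, (Q 1 0 - Q 0 1) / 2])
    (ψ₁ : ℝ) (hψle : Ψ ≤ ψ₁) (hψlt : ψ₁ < 1)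
    (V : ℝ)
    (hV : V = (1 / 2) * Kp * ‖ep‖ ^ 2 + (1 / 2) * m * ‖ev‖ ^ 2 + c₁ * ⟪ep, ev⟫
      + (1 / 2) * ⟪eΩ, Matrix.toEuclideanLin J eΩ⟫ + KR * Ψ + c₂ * ⟪eR, eΩ⟫) :
    (1 / 2) * (Kp * ‖ep‖ ^ 2 - 2 * c₁ * ‖ep‖ * ‖ev‖ + m * ‖ev‖ ^ 2)
        + (1 / 2) * (KR * ‖eR‖ ^ 2 - 2 * c₂ * ‖eR‖ * ‖eΩ‖ + lm * ‖eΩ‖ ^ 2)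
      ≤ V
    ∧ V ≤ (1 / 2) * (Kp * ‖ep‖ ^ 2 + 2 * c₁ * ‖ep‖ * ‖ev‖ + m * ‖ev‖ ^ 2)
        + (1 / 2) * ((2 * KR / (2 - ψ₁)) * ‖eR‖ ^ 2 + 2 * c₂ * ‖eR‖ * ‖eΩ‖
            + lM * ‖eΩ‖ ^ 2) := by
  -- Q is in SO(3)
  have hQQ : Qᵀ * Q = 1 := by
    have hRdRd : Rd * Rdᵀ = 1 := mul_eq_one_comm.mp hRd
    rw [hQ, Matrix.transpose_mul, Matrix.transpose_transpose]
    calc Rᵀ * Rd * (Rdᵀ * R) = Rᵀ * (Rd * Rdᵀ) * R := by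
          rw [Matrix.mul_assoc, Matrix.mul_assoc, Matrix.mul_assoc]
      _ = 1 := by rw [hRdRd, Matrix.mul_one, hR]
  have hQdet : Q.det = 1 := by
    rw [hQ, Matrix.det_mul, Matrix.det_transpose, hRddet, hRdet, one_mul]
  obtain ⟨hkey, htr3⟩ := so3_key Q hQQ hQdet
  -- Ψ = (3 - tr Q)/2
  have hΨ' : Ψ = (3 - Q.trace) / 2 := by
    rw [hΨ, Matrix.trace_sub, Matrix.trace_one]
    norm_num
  -- eR squared norm
  have heRsq : ‖eR‖^2 = Ψ * (2 - Ψ) := by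
    rw [euclid_norm_sq, heR]
    simp only [WithLp.equiv_symm_apply, WithLp.ofLp_toLp, Matrix.cons_val_zero, Matrix.cons_val_one,
      Matrix.head_cons, Matrix.cons_val_two, Matrix.tail_cons]
    rw [hΨ']
    linear_combination hkey / 4
  have hΨ0 : 0 ≤ Ψ := by rw [hΨ']; linarith
  have h2ψ : 0 < 2 - ψ₁ := by linarith
  -- bounds on KR * Ψ
  have hlow : KR / 2 * ‖eR‖^2 ≤ KR * Ψ := by
    rw [heRsq]; nlinarith [sq_nonneg Ψ, hKR.le]
  have hhigh : KR * Ψ ≤ KR / (2 - ψ₁) * ‖eR‖^2 := by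
    rw [heRsq, div_mul_eq_mul_div, le_div_iff₀ h2ψ]
    nlinarith [mul_nonneg (mul_nonneg hKR.le hΨ0) (sub_nonneg.2 hψle)]
  -- inner product bounds
  have hpv := abs_real_inner_le_norm ep ev
  have hRΩ := abs_real_inner_le_norm eR eΩ
  rw [abs_le] at hpv hRΩ
  obtain ⟨hJl, hJu⟩ := hJ eΩ
  have e1l := mul_le_mul_of_nonneg_left hpv.1 hc₁
  have e1u := mul_le_mul_of_nonneg_left hpv.2 hc₁
  have e2l := mul_le_mul_of_nonneg_left hRΩ.1 hc₂
  have e2u := mul_le_mul_of_nonneg_left hRΩ.2 hc₂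
  have hdiv : KR / (2 - ψ₁) * ‖eR‖^2 = (1/2) * ((2 * KR / (2 - ψ₁)) * ‖eR‖^2) := by
    field_simp
  constructor
  · rw [hV]; linarith
  · rw [hV]; linarith
end

section
/- Let β, ω > 0 be real numbers with β ≠ ω. Let σ : [0,∞) → ℝⁿ be continuously differentiable with ‖σ(0)‖ ≤ Δ₀ and ‖σ′(t)‖ ≤ D for all t ≥ 0, and let P : [0,∞) → ℝⁿ be continuous with ‖P(t)‖ ≤ P̄ for all t ≥ 0. Define η(t) = ∫₀ᵗ ω e^{−ω(t−τ)} σ(τ) dτ. Then for all t ≥ 0, |∫₀ᵗ e^{−β(t−τ)} ⟨P(τ), σ(τ) − η(τ)⟩ dτ| ≤ P̄ ( Δ₀/|β − ω| + D/(β ω) ). -/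
open scoped RealInnerProductSpace

open MeasureTheory intervalIntegral Set

lemma int_exp_mul (c : ℝ) (hc : c ≠ 0) (t : ℝ) :
    ∫ τ in (0:ℝ)..t, Real.exp (c * τ) = (Real.exp (c * t) - 1) / c := by
  have h : ∀ x ∈ Set.uIcc (0:ℝ) t,
      HasDerivAt (fun x => Real.exp (c * x) / c) (Real.exp (c * x)) x := by
    intro x _
    have h1 : HasDerivAt (fun x : ℝ => c * x) c x := by
      simpa using (hasDerivAt_id x).const_mul c
    have := (h1.exp).div_const c
    simpa [mul_div_assoc, mul_div_cancel_left₀ _ hc, mul_comm] using this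
  rw [intervalIntegral.integral_eq_sub_of_hasDerivAt h
    ((Real.continuous_exp.comp (continuous_const.mul continuous_id)).intervalIntegrable _ _)]
  simp [sub_div]

lemma key_bound {n : ℕ} (ω : ℝ) (hω : 0 < ω) (Δ₀ D : ℝ)
    (σ σ' : ℝ → EuclideanSpace ℝ (Fin n))
    (hσderiv : ∀ t ≥ (0 : ℝ), HasDerivAt σ (σ' t) t)
    (hσ'cont : ContinuousOn σ' (Set.Ici (0 : ℝ)))
    (hσ0 : ‖σ 0‖ ≤ Δ₀)
    (hσ'bound : ∀ t ≥ (0 : ℝ), ‖σ' t‖ ≤ D)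
    (η : ℝ → EuclideanSpace ℝ (Fin n))
    (hη : ∀ t, η t = ∫ τ in (0 : ℝ)..t, (ω * Real.exp (-ω * (t - τ))) • σ τ) :
    ∀ τ ≥ (0 : ℝ), ‖σ τ - η τ‖ ≤ Δ₀ * Real.exp (-ω * τ) + D / ω := by
  have hD : 0 ≤ D := le_trans (norm_nonneg _) (hσ'bound 0 le_rfl)
  have σcontAt : ∀ s ≥ (0:ℝ), ContinuousAt σ s := fun s hs => (hσderiv s hs).continuousAt
  set G : ℝ → EuclideanSpace ℝ (Fin n) :=
    fun s => ∫ u in (0:ℝ)..s, Real.exp (ω * u) • σ u with hG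
  set f : ℝ → EuclideanSpace ℝ (Fin n) := fun u => Real.exp (ω * u) • σ u with hf
  have hfcont : ∀ s ≥ (0:ℝ), ContinuousAt f s := fun s hs =>
    (Real.continuous_exp.comp (continuous_const.mul continuous_id)).continuousAt.smul
      (σcontAt s hs)
  have hfcontOn : ∀ b ≥ (0:ℝ), ContinuousOn f (Set.Icc 0 b) := fun b _ =>
    fun u hu => ((hfcont u hu.1).continuousWithinAt)
  have hfint : ∀ b ≥ (0:ℝ), IntervalIntegrable f MeasureTheory.volume 0 b := fun b hb =>
    ((hfcontOn b hb).mono (by rw [Set.uIcc_of_le hb])).intervalIntegrable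
  have hηG : ∀ s, η s = (ω * Real.exp (-ω * s)) • G s := by
    intro s
    rw [hη s, hG, ← intervalIntegral.integral_smul]
    apply intervalIntegral.integral_congr
    intro u _
    show (ω * Real.exp (-ω * (s - u))) • σ u = (ω * Real.exp (-ω * s)) • Real.exp (ω * u) • σ u
    rw [smul_smul, mul_assoc, ← Real.exp_add]
    congr 2
    ring
  -- derivative of η at positive points
  have hηd : ∀ s > (0:ℝ), HasDerivAt η (ω • σ s - ω • η s) s := by
    intro s hs
    have hG' : HasDerivAt G (f s) s :=
      intervalIntegral.integral_hasDerivAt_right (hfint s hs.le)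
        (ContinuousOn.stronglyMeasurableAtFilter isOpen_Ioi
          (fun u hu => (hfcont u (le_of_lt hu)).continuousWithinAt) s hs)
        (hfcont s hs.le)
    have hc : HasDerivAt (fun s : ℝ => ω * Real.exp (-ω * s))
        (ω * (Real.exp (-ω * s) * -ω)) s := by
      have h1 : HasDerivAt (fun s : ℝ => -ω * s) (-ω) s := by
        simpa using (hasDerivAt_id s).const_mul (-ω)
      exact (h1.exp).const_mul ω
    have hmain := hc.smul hG'
    have heq : η = fun s => (ω * Real.exp (-ω * s)) • G s := funext hηG
    have hmain' : HasDerivAt η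
        ((ω * Real.exp (-ω * s)) • f s + (ω * (Real.exp (-ω * s) * -ω)) • G s) s := by
      rw [heq]; exact hmain
    convert hmain' using 1
    rw [hηG s, hf]
    have hey : Real.exp (-ω * s) * Real.exp (ω * s) = 1 := by
      have h0 : -ω * s + ω * s = 0 := by ring
      rw [← Real.exp_add, h0, Real.exp_zero]
    match_scalars
    · linear_combination (-ω) * hey
    · ring
  -- auxiliary function h
  intro τ hτ
  set h : ℝ → EuclideanSpace ℝ (Fin n) := fun s => Real.exp (ω * s) • (σ s - η s) with hh
  have hGcont : ContinuousOn G (Set.Icc 0 τ) := by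
    have := intervalIntegral.continuousOn_primitive_interval
      (μ := MeasureTheory.volume) (a := 0) (b := τ) (f := f)
      (((hfcontOn τ hτ).mono (by rw [Set.uIcc_of_le hτ])).integrableOn_compact
        (by rw [Set.uIcc_of_le hτ]; exact isCompact_Icc))
    rwa [Set.uIcc_of_le hτ] at this
  have hηcont : ContinuousOn η (Set.Icc 0 τ) := by
    have hsc : ContinuousOn (fun s => (ω * Real.exp (-ω * s)) • G s) (Set.Icc 0 τ) :=
      ((continuous_const.mul
        (Real.continuous_exp.comp (continuous_const.mul continuous_id))).continuousOn).smul hGcont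
    exact hsc.congr (fun s _ => hηG s)
  have hhcont : ContinuousOn h (Set.Icc 0 τ) := by
    refine ((Real.continuous_exp.comp (continuous_const.mul continuous_id)).continuousOn).smul ?_
    exact ContinuousOn.sub (fun s hs => (σcontAt s hs.1).continuousWithinAt) hηcont
  have hhd : ∀ s ∈ Set.Ioo (0:ℝ) τ, HasDerivAt h (Real.exp (ω * s) • σ' s) s := by
    intro s hs
    have he : HasDerivAt (fun s : ℝ => Real.exp (ω * s)) (Real.exp (ω * s) * ω) s := by
      have h1 : HasDerivAt (fun s : ℝ => ω * s) ω s := by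
        simpa using (hasDerivAt_id s).const_mul ω
      exact h1.exp
    have hsub : HasDerivAt (fun s => σ s - η s) (σ' s - (ω • σ s - ω • η s)) s :=
      (hσderiv s hs.1.le).sub (hηd s hs.1)
    have := he.smul hsub
    exact this.congr_deriv (by module)
  have hftc : ∫ s in (0:ℝ)..τ, Real.exp (ω * s) • σ' s = h τ - h 0 := by
    apply intervalIntegral.integral_eq_sub_of_hasDeriv_right_of_le hτ hhcont
      (fun x hx => (hhd x hx).hasDerivWithinAt)
    apply ContinuousOn.intervalIntegrable
    rw [Set.uIcc_of_le hτ]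
    exact ((Real.continuous_exp.comp (continuous_const.mul continuous_id)).continuousOn).smul
      (hσ'cont.mono (fun x hx => hx.1))
  have hbound : ‖h τ - h 0‖ ≤ D * (Real.exp (ω * τ) - 1) / ω := by
    rw [← hftc]
    have hIexp : ∫ s in (0:ℝ)..τ, Real.exp (ω * s) * D
        = D * (Real.exp (ω * τ) - 1) / ω := by
      rw [intervalIntegral.integral_mul_const, int_exp_mul ω (ne_of_gt hω) τ]
      ring
    calc ‖∫ s in (0:ℝ)..τ, Real.exp (ω * s) • σ' s‖
        ≤ |∫ s in (0:ℝ)..τ, Real.exp (ω * s) * D| := by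
          apply intervalIntegral.norm_integral_le_abs_of_norm_le
          · apply MeasureTheory.ae_restrict_of_forall_mem measurableSet_uIoc
            intro s hsm
            rw [Set.uIoc_of_le hτ] at hsm
            rw [norm_smul, Real.norm_eq_abs, abs_of_pos (Real.exp_pos _)]
            exact mul_le_mul_of_nonneg_left (hσ'bound s hsm.1.le) (Real.exp_pos _).le
          · apply ContinuousOn.intervalIntegrable
            exact ((Real.continuous_exp.comp
              (continuous_const.mul continuous_id)).mul continuous_const).continuousOn
      _ = D * (Real.exp (ω * τ) - 1) / ω := by
          have h1 : (0:ℝ) ≤ Real.exp (ω * τ) - 1 := by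
            have : (1:ℝ) ≤ Real.exp (ω * τ) := by
              rw [← Real.exp_zero]
              exact Real.exp_le_exp.mpr (by positivity)
            linarith
          rw [hIexp, abs_of_nonneg (div_nonneg (mul_nonneg hD h1) hω.le)]
  have hη0 : η 0 = 0 := by rw [hη 0, intervalIntegral.integral_same]
  have hh0 : ‖h 0‖ ≤ Δ₀ := by
    simp only [hh, hη0, mul_zero, Real.exp_zero, one_smul, sub_zero]
    exact hσ0
  have hhτ : ‖h τ‖ ≤ Δ₀ + D * (Real.exp (ω * τ) - 1) / ω := by
    calc ‖h τ‖ = ‖h 0 + (h τ - h 0)‖ := by congr 1; abel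
      _ ≤ ‖h 0‖ + ‖h τ - h 0‖ := norm_add_le _ _
      _ ≤ _ := add_le_add hh0 hbound
  have hστ : σ τ - η τ = Real.exp (-ω * τ) • h τ := by
    rw [hh, smul_smul, ← Real.exp_add]
    ring_nf
    simp
  rw [hστ, norm_smul, Real.norm_eq_abs, abs_of_pos (Real.exp_pos _)]
  have hexp1 : Real.exp (-ω * τ) * Real.exp (ω * τ) = 1 := by
    rw [← Real.exp_add]; ring_nf; simp
  have hexp2 : Real.exp (-ω * τ) ≤ 1 := by
    rw [← Real.exp_zero]
    apply Real.exp_le_exp.mpr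
    nlinarith
  have := mul_le_mul_of_nonneg_left hhτ (Real.exp_pos (-ω * τ)).le
  have hepos := Real.exp_pos (-ω * τ)
  calc Real.exp (-ω * τ) * ‖h τ‖
      ≤ Real.exp (-ω * τ) * (Δ₀ + D * (Real.exp (ω * τ) - 1) / ω) := this
    _ ≤ Δ₀ * Real.exp (-ω * τ) + D / ω := by
        have key : Real.exp (-ω * τ) * (Δ₀ + D * (Real.exp (ω * τ) - 1) / ω)
            = Δ₀ * Real.exp (-ω * τ) + D / ω - D / ω * Real.exp (-ω * τ) := by
          linear_combination D / ω * hexp1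
        rw [key]
        have : 0 ≤ D / ω * Real.exp (-ω * τ) :=
          mul_nonneg (div_nonneg hD hω.le) hepos.le
        linarith

/-- bound on the term Φ₄, equation (58) of the paper, with
`ζ₁(ω) = Δ₀/|β−ω| + D/(βω)`: the effect of the uncompensated in-band
uncertainty. Here `η` is the zero-initial-condition output of the first-order
low-pass filter `C(s) = ω/(s+ω)` applied to `σ`. -/
theorem phi4_bound {n : ℕ}
    (β ω : ℝ) (hβ : 0 < β) (hω : 0 < ω) (hβω : β ≠ ω)
    (Δ₀ D Pbar : ℝ)
    (σ σ' : ℝ → EuclideanSpace ℝ (Fin n))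
    (hσderiv : ∀ t ≥ (0 : ℝ), HasDerivAt σ (σ' t) t)
    (hσ'cont : ContinuousOn σ' (Set.Ici (0 : ℝ)))
    (hσ0 : ‖σ 0‖ ≤ Δ₀)
    (hσ'bound : ∀ t ≥ (0 : ℝ), ‖σ' t‖ ≤ D)
    (P : ℝ → EuclideanSpace ℝ (Fin n))
    (hPcont : ContinuousOn P (Set.Ici (0 : ℝ)))
    (hPbound : ∀ t ≥ (0 : ℝ), ‖P t‖ ≤ Pbar)
    (η : ℝ → EuclideanSpace ℝ (Fin n))
    (hη : ∀ t, η t = ∫ τ in (0 : ℝ)..t, (ω * Real.exp (-ω * (t - τ))) • σ τ) :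
    ∀ t ≥ (0 : ℝ),
      |∫ τ in (0 : ℝ)..t, Real.exp (-β * (t - τ)) * ⟪P τ, σ τ - η τ⟫|
        ≤ Pbar * (Δ₀ / |β - ω| + D / (β * ω)) := by
  intro t ht
  have hD : 0 ≤ D := le_trans (norm_nonneg _) (hσ'bound 0 le_rfl)
  have hΔ : 0 ≤ Δ₀ := le_trans (norm_nonneg _) hσ0
  have hP : 0 ≤ Pbar := le_trans (norm_nonneg _) (hPbound 0 le_rfl)
  have habs_pos : (0:ℝ) < |β - ω| := abs_pos.mpr (sub_ne_zero.mpr hβω)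
  have hβω' : β - ω ≠ 0 := sub_ne_zero.mpr hβω
  have key := key_bound ω hω Δ₀ D σ σ' hσderiv hσ'cont hσ0 hσ'bound η hη
  set g : ℝ → ℝ :=
    fun τ => Real.exp (-β * (t - τ)) * (Pbar * (Δ₀ * Real.exp (-ω * τ) + D / ω)) with hg
  have hgcont : Continuous g := by
    apply Continuous.mul
    · exact Real.continuous_exp.comp (continuous_const.mul (continuous_const.sub continuous_id))
    · exact continuous_const.mul ((continuous_const.mul
        (Real.continuous_exp.comp (continuous_const.mul continuous_id))).add continuous_const)
  -- step 1: |integral| ≤ ∫ g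
  have step1 : |∫ τ in (0:ℝ)..t, Real.exp (-β * (t - τ)) * ⟪P τ, σ τ - η τ⟫|
      ≤ |∫ τ in (0:ℝ)..t, g τ| := by
    rw [← Real.norm_eq_abs]
    apply intervalIntegral.norm_integral_le_abs_of_norm_le
    · apply MeasureTheory.ae_restrict_of_forall_mem measurableSet_uIoc
      intro τ hτm
      rw [Set.uIoc_of_le ht] at hτm
      have hτ0 : (0:ℝ) ≤ τ := hτm.1.le
      rw [Real.norm_eq_abs, abs_mul, abs_of_pos (Real.exp_pos _)]
      apply mul_le_mul_of_nonneg_left _ (Real.exp_pos _).le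
      calc |⟪P τ, σ τ - η τ⟫| ≤ ‖P τ‖ * ‖σ τ - η τ‖ := abs_real_inner_le_norm _ _
        _ ≤ Pbar * (Δ₀ * Real.exp (-ω * τ) + D / ω) :=
            mul_le_mul (hPbound τ hτ0) (key τ hτ0) (norm_nonneg _) hP
    · exact hgcont.intervalIntegrable _ _
  have hgnn : ∀ τ, 0 ≤ g τ := by
    intro τ
    apply mul_nonneg (Real.exp_pos _).le
    exact mul_nonneg hP (add_nonneg (mul_nonneg hΔ (Real.exp_pos _).le)
      (div_nonneg hD hω.le))
  have hInn : 0 ≤ ∫ τ in (0:ℝ)..t, g τ :=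
    intervalIntegral.integral_nonneg ht (fun u _ => hgnn u)
  rw [abs_of_nonneg hInn] at step1
  -- step 2: compute ∫ g
  set C1 : ℝ := Pbar * Δ₀ * Real.exp (-β * t) with hC1
  set C2 : ℝ := Pbar * (D / ω) * Real.exp (-β * t) with hC2
  have hgeq : ∀ τ, g τ = C1 * Real.exp ((β - ω) * τ) + C2 * Real.exp (β * τ) := by
    intro τ
    have e1 : Real.exp (-β * (t - τ)) * Real.exp (-ω * τ)
        = Real.exp (-β * t) * Real.exp ((β - ω) * τ) := by
      rw [← Real.exp_add, ← Real.exp_add]; congr 1; ring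
    have e2 : Real.exp (-β * (t - τ)) = Real.exp (-β * t) * Real.exp (β * τ) := by
      rw [← Real.exp_add]; congr 1; ring
    rw [hg, hC1, hC2]
    simp only
    linear_combination (Pbar * Δ₀) * e1 + (Pbar * (D / ω)) * e2
  have hIval : ∫ τ in (0:ℝ)..t, g τ
      = C1 * ((Real.exp ((β - ω) * t) - 1) / (β - ω))
        + C2 * ((Real.exp (β * t) - 1) / β) := by
    have hcongr : ∫ τ in (0:ℝ)..t, g τ = ∫ τ in (0:ℝ)..t,
        (C1 * Real.exp ((β - ω) * τ) + C2 * Real.exp (β * τ)) :=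
      intervalIntegral.integral_congr (fun τ _ => hgeq τ)
    rw [hcongr]
    rw [intervalIntegral.integral_add (f := fun τ => C1 * Real.exp ((β - ω) * τ))
      (g := fun τ => C2 * Real.exp (β * τ))
      (((continuous_const.mul ((Real.continuous_exp).comp
          (continuous_const.mul continuous_id)) : Continuous fun τ : ℝ =>
          C1 * Real.exp ((β - ω) * τ))).intervalIntegrable _ _)
      (((continuous_const.mul ((Real.continuous_exp).comp
          (continuous_const.mul continuous_id)) : Continuous fun τ : ℝ =>
          C2 * Real.exp (β * τ))).intervalIntegrable _ _),
      intervalIntegral.integral_const_mul, intervalIntegral.integral_const_mul,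
      int_exp_mul (β - ω) hβω' t, int_exp_mul β hβ.ne' t]
  -- step 3: bound the two terms
  have hexp_le_one : ∀ c : ℝ, 0 < c → Real.exp (-c * t) ≤ 1 := by
    intro c hc
    rw [← Real.exp_zero]
    apply Real.exp_le_exp.mpr
    nlinarith
  have hE : Real.exp (-β * t) * (Real.exp ((β - ω) * t) - 1)
      = Real.exp (-ω * t) - Real.exp (-β * t) := by
    rw [mul_sub, ← Real.exp_add, mul_one]
    congr 2
    ring
  have hE2 : Real.exp (-β * t) * (Real.exp (β * t) - 1) = 1 - Real.exp (-β * t) := by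
    rw [mul_sub, ← Real.exp_add, mul_one]
    have : -β * t + β * t = 0 := by ring
    rw [this, Real.exp_zero]
  have t1eq : C1 * ((Real.exp ((β - ω) * t) - 1) / (β - ω))
      = Pbar * Δ₀ * ((Real.exp (-ω * t) - Real.exp (-β * t)) / (β - ω)) := by
    rw [hC1]
    linear_combination (Pbar * Δ₀ / (β - ω)) * hE
  have t2eq : C2 * ((Real.exp (β * t) - 1) / β)
      = Pbar * (D / ω) * ((1 - Real.exp (-β * t)) / β) := by
    rw [hC2]
    linear_combination (Pbar * (D / ω) / β) * hE2
  have hQ : (Real.exp (-ω * t) - Real.exp (-β * t)) / (β - ω) ≤ 1 / |β - ω| := by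
    have h2 : |Real.exp (-ω * t) - Real.exp (-β * t)| ≤ 1 := by
      rw [abs_le]
      constructor
      · nlinarith [Real.exp_pos (-ω * t), hexp_le_one β hβ]
      · nlinarith [Real.exp_pos (-β * t), hexp_le_one ω hω]
    calc (Real.exp (-ω * t) - Real.exp (-β * t)) / (β - ω)
        ≤ |(Real.exp (-ω * t) - Real.exp (-β * t)) / (β - ω)| := le_abs_self _
      _ = |Real.exp (-ω * t) - Real.exp (-β * t)| / |β - ω| := abs_div _ _
      _ ≤ 1 / |β - ω| := (div_le_div_iff_of_pos_right habs_pos).mpr h2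
  have hQ2 : (1 - Real.exp (-β * t)) / β ≤ 1 / β :=
    (div_le_div_iff_of_pos_right hβ).mpr (by linarith [Real.exp_pos (-β * t)])
  refine step1.trans ?_
  rw [hIval, t1eq, t2eq]
  have b1 : Pbar * Δ₀ * ((Real.exp (-ω * t) - Real.exp (-β * t)) / (β - ω))
      ≤ Pbar * Δ₀ * (1 / |β - ω|) :=
    mul_le_mul_of_nonneg_left hQ (mul_nonneg hP hΔ)
  have b2 : Pbar * (D / ω) * ((1 - Real.exp (-β * t)) / β)
      ≤ Pbar * (D / ω) * (1 / β) :=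
    mul_le_mul_of_nonneg_left hQ2 (mul_nonneg hP (div_nonneg hD hω.le))
  have hfin : Pbar * Δ₀ * (1 / |β - ω|) + Pbar * (D / ω) * (1 / β)
      = Pbar * (Δ₀ / |β - ω| + D / (β * ω)) := by ring
  linarith
end
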